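/- arXiv:2011.05882 — 6 statements merged into one kernel-verified Lean document; each statement's English description precedes it below -/
import Mathlib

section
/- Let G be a directed partially ordered abelian group with the Riesz interpolation property which is Dedekind monotone σ-complete, and let F : ℝⁿ → E be an n-dimensional spectral resolution on the perfect effect algebra E = Γ_ea(ℤ ×ₗ G,(1,0)). Then for every nonempty set of indices {i₁ < ⋯ < i_j} ⊆ {1,…,n} and all fixed real values of the remaining coordinates, the set {F(s₁,…,sₙ) : s_{i₁},…,s_{i_j} ∈ ℝ} (the remaining coordinates held fixed) has a least upper bound in E. -/
open Classical

namespace Paper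

/-- A po-group is directed. -/
def DirectedPO (G : Type*) [AddCommGroup G] [PartialOrder G] : Prop :=
  ∀ a b : G, ∃ c, a ≤ c ∧ b ≤ c

/-- The Riesz interpolation property for a po-group `G`. -/
def RieszInterp (G : Type*) [AddCommGroup G] [PartialOrder G] : Prop :=
  ∀ a₁ a₂ b₁ b₂ : G, a₁ ≤ b₁ → a₁ ≤ b₂ → a₂ ≤ b₁ → a₂ ≤ b₂ →
    ∃ c, (a₁ ≤ c ∧ a₂ ≤ c) ∧ (c ≤ b₁ ∧ c ≤ b₂)

/-- Dedekind monotone σ-completeness of a po-group: every ascending sequence bounded above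
has a supremum and every descending sequence bounded below has an infimum. -/
def MonSigmaComplete (G : Type*) [AddCommGroup G] [PartialOrder G] : Prop :=
  (∀ f : ℕ → G, Monotone f → BddAbove (Set.range f) → ∃ s, IsLUB (Set.range f) s) ∧
  (∀ f : ℕ → G, Antitone f → BddBelow (Set.range f) → ∃ s, IsGLB (Set.range f) s)

/-- Dedekind σ-completeness: every nonempty countable subset bounded above has a supremum. -/
def DedekindSC (G : Type*) [AddCommGroup G] [PartialOrder G] : Prop :=
  ∀ S : Set G, S.Nonempty → S.Countable → BddAbove S → ∃ s, IsLUB S s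

/-- The interval algebra `Γ(ℤ ×ₗ G,(k,0)) = {a : 0 ≤ a ≤ (k,0)}` in the lexicographic
product `ℤ ×ₗ G`. -/
def Ek (G : Type*) [AddCommGroup G] [PartialOrder G] (k : ℤ) : Set (ℤ ×ₗ G) :=
  Set.Icc 0 (toLex (k, (0 : G)))

/-- The iterated difference `Δ₁(a₁,b₁)⋯Δₙ(aₙ,bₙ)F`, written as the signed sum over all
corners of the box `[a,b)`; the sign is `(-1)^(number of coordinates set to the lower
endpoint)`. -/
def volSum {M : Type*} [AddCommGroup M] {ι : Type*} [Fintype ι] [DecidableEq ι]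
    (F : (ι → ℝ) → M) (a b : ι → ℝ) : M :=
  ∑ S : Finset ι, (-1 : ℤ) ^ (Fintype.card ι - S.card) •
    F (fun i => if i ∈ S then b i else a i)

variable {G : Type*} [AddCommGroup G] [PartialOrder G]
variable {ι : Type*} [Fintype ι] [DecidableEq ι]

/-- An `n`-dimensional pseudo spectral resolution with values in `Ek G k`:
the volume condition, left-continuity, vanishing along each coordinate, and the range
has a least upper bound in `Ek G k`. -/
structure IsPseudoSR (k : ℤ) (F : (ι → ℝ) → ℤ ×ₗ G) : Prop where
  mem : ∀ t, F t ∈ Ek G k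
  vol : ∀ a b : ι → ℝ, (∀ i, a i ≤ b i) → 0 ≤ volSum F a b
  leftCont : ∀ t, IsLUB (F '' {s | ∀ i, s i < t i}) (F t)
  coordZero : ∀ (i : ι) (t : ι → ℝ),
    IsGLB (Set.range fun r => F (Function.update t i r)) 0
  rangeSup : ∃ u ∈ Ek G k, IsLUB (Set.range F) u

/-- An `n`-dimensional spectral resolution on the perfect algebra `Γ(ℤ ×ₗ G,(1,0))`:
the volume condition, left-continuity, vanishing along each coordinate, total mass `(1,0)`,
and the characteristic-point condition (v). -/
structure IsSR1 (F : (ι → ℝ) → ℤ ×ₗ G) : Prop where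
  mem : ∀ t, F t ∈ Ek G 1
  vol : ∀ a b : ι → ℝ, (∀ i, a i ≤ b i) → 0 ≤ volSum F a b
  leftCont : ∀ t, IsLUB (F '' {s | ∀ i, s i < t i}) (F t)
  coordZero : ∀ (i : ι) (t : ι → ℝ),
    IsGLB (Set.range fun r => F (Function.update t i r)) 0
  total : IsLUB (Set.range F) (toLex (1, (0 : G)))
  charPt : ∃ t0 : ι → ℝ,
    (∀ s, (ofLex (F s)).1 = 1 ↔ ∀ i, t0 i < s i) ∧
    ∃ a ∈ Ek G 1, IsGLB (F '' {s | ∀ i, t0 i < s i}) a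

/-- A two-dimensional spectral resolution on the perfect algebra `Γ(ℤ ×ₗ G,(1,0))`. -/
structure IsSR2 (F : ℝ → ℝ → ℤ ×ₗ G) : Prop where
  mem : ∀ s t, F s t ∈ Ek G 1
  vol : ∀ a₁ b₁ a₂ b₂ : ℝ, a₁ ≤ b₁ → a₂ ≤ b₂ →
    0 ≤ F b₁ b₂ - F a₁ b₂ - F b₁ a₂ + F a₁ a₂
  leftCont : ∀ s t : ℝ, IsLUB {y | ∃ s' t' : ℝ, s' < s ∧ t' < t ∧ y = F s' t'} (F s t)
  coordZero₁ : ∀ s : ℝ, IsGLB (Set.range fun t => F s t) 0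
  coordZero₂ : ∀ t : ℝ, IsGLB (Set.range fun s => F s t) 0
  total : IsLUB {y | ∃ s t : ℝ, y = F s t} (toLex (1, (0 : G)))
  charPt : ∃ s₀ t₀ : ℝ,
    (∀ s t, (ofLex (F s t)).1 = 1 ↔ (s₀ < s ∧ t₀ < t)) ∧
    ∃ a ∈ Ek G 1, IsGLB {y | ∃ s t : ℝ, s₀ < s ∧ t₀ < t ∧ y = F s t} a

/-- An observable on `Γ(ℤ ×ₗ G,(k,0))` defined on the Borel (measurable) subsets of `X`. -/
def IsObs {X : Type*} [MeasurableSpace X] (k : ℤ) (x : Set X → ℤ ×ₗ G) : Prop :=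
  (∀ A, MeasurableSet A → x A ∈ Ek G k) ∧
  x Set.univ = toLex (k, (0 : G)) ∧
  (∀ A B : Set X, MeasurableSet A → MeasurableSet B → Disjoint A B →
    x (A ∪ B) = x A + x B) ∧
  (∀ A : ℕ → Set X, (∀ i, MeasurableSet (A i)) → Monotone A →
    IsLUB (Set.range fun i => x (A i)) (x (⋃ i, A i)))

end Paper

section AuxLemmas
open Function Paper

set_option linter.unusedSectionVars false

variable {G : Type*} [AddCommGroup G] [PartialOrder G] [CovariantClass G G (· + ·) (· ≤ ·)]

noncomputable instance lexOAG : IsOrderedAddMonoid (ℤ ×ₗ G) :=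
  { add_le_add_left := by
      intro a b hab c
      rw [add_comm a c, add_comm b c]
      rcases (Prod.Lex.le_iff (x := a) (y := b)).1 hab with h | ⟨h1, h2⟩
      · exact (Prod.Lex.le_iff (x := c+a) (y := c+b)).2
          (Or.inl (add_lt_add_right h (ofLex c).1))
      · refine (Prod.Lex.le_iff (x := c+a) (y := c+b)).2
          (Or.inr ⟨?_, add_le_add_right h2 (ofLex c).2⟩)
        show (ofLex c).1 + (ofLex a).1 = (ofLex c).1 + (ofLex b).1
        rw [h1] }

theorem lex_le_iff' (x y : ℤ ×ₗ G) :
    x ≤ y ↔ (ofLex x).1 < (ofLex y).1 ∨ ((ofLex x).1 = (ofLex y).1 ∧ (ofLex x).2 ≤ (ofLex y).2) :=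
  Prod.Lex.le_iff (x := x) (y := y)

theorem lex_fst_mono' {x y : ℤ ×ₗ G} (h : x ≤ y) : (ofLex x).1 ≤ (ofLex y).1 := by
  rcases (lex_le_iff' x y).1 h with h1 | ⟨h1, _⟩
  · exact h1.le
  · exact h1.le

theorem lex_le_snd' {x y : ℤ ×ₗ G} (h : x ≤ y) (hf : (ofLex y).1 ≤ (ofLex x).1) :
    (ofLex x).2 ≤ (ofLex y).2 := by
  rcases (lex_le_iff' x y).1 h with h1 | ⟨_, h2⟩
  · exact absurd hf (not_le.2 h1)
  · exact h2

end AuxLemmas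

section Lemmas
open Function
set_option linter.unusedSectionVars false
variable {M : Type*} [AddCommGroup M] [PartialOrder M] [IsOrderedAddMonoid M]
variable {ι : Type*} [Fintype ι] [DecidableEq ι]

/-- monotonicity of F from left-continuity -/
theorem F_mono {F : (ι → ℝ) → M}
    (hlc : ∀ t, IsLUB (F '' {s | ∀ i, s i < t i}) (F t))
    {s u : ι → ℝ} (h : ∀ i, s i ≤ u i) : F s ≤ F u := by
  apply (hlc s).2
  rintro y ⟨s', hs', rfl⟩
  exact (hlc u).1 ⟨s', fun i => lt_of_lt_of_le (hs' i) (h i), rfl⟩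

/-- peeling lemma -/
theorem peel {A : Type*} (T : Finset A) (f : A → ℝ → M)
    (hm : ∀ a, Monotone (f a)) (hg : ∀ a, IsGLB (Set.range (f a)) 0) :
    ∀ x : M, (∀ c : ℝ, x ≤ ∑ a ∈ T, f a c) → x ≤ 0 := by
  induction T using Finset.induction_on with
  | empty => intro x hx; simpa using hx 0
  | @insert a T ha ih =>
    intro x hx
    have key : ∀ c₀ : ℝ, x ≤ f a c₀ := by
      intro c₀
      rw [← sub_nonpos]
      apply ih
      intro c
      have h1 := hx (min c c₀)
      rw [Finset.sum_insert ha] at h1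
      have h2 : f a (min c c₀) ≤ f a c₀ := hm a (min_le_right _ _)
      have h3 : ∑ b ∈ T, f b (min c c₀) ≤ ∑ b ∈ T, f b c :=
        Finset.sum_le_sum fun b _ => hm b (min_le_left _ _)
      have h4 : x ≤ f a c₀ + ∑ b ∈ T, f b c := h1.trans (add_le_add h2 h3)
      rw [sub_le_iff_le_add, add_comm]
      exact h4
    exact (hg a).2 (by rintro _ ⟨c, rfl⟩; exact key c)

def svol (F : (ι → ℝ) → M) (K : Finset ι) (a b : ι → ℝ) : M :=
  ∑ S ∈ K.powerset, (-1 : ℤ) ^ (K.card - S.card) • F (fun i => if i ∈ S then b i else a i)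

theorem svol_univ (F : (ι → ℝ) → M) (a b : ι → ℝ) :
    svol F Finset.univ a b = Paper.volSum F a b := by
  unfold svol Paper.volSum
  rw [Finset.powerset_univ, Finset.card_univ]

theorem svol_empty (F : (ι → ℝ) → M) (a b : ι → ℝ) : svol F ∅ a b = F a := by
  unfold svol
  rw [Finset.powerset_empty, Finset.sum_singleton]
  simp

theorem svol_b_congr (F : (ι → ℝ) → M) {K : Finset ι} {j : ι} (hj : j ∉ K)
    (a b : ι → ℝ) (c : ℝ) : svol F K a (update b j c) = svol F K a b := by
  unfold svol
  refine Finset.sum_congr rfl fun S hS => ?_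
  have hSK := Finset.mem_powerset.1 hS
  have he : (fun i => if i ∈ S then update b j c i else a i)
      = (fun i => if i ∈ S then b i else a i) := by
    funext i
    by_cases hiS : i ∈ S
    · have : i ≠ j := fun h => hj (h ▸ hSK hiS)
      simp [hiS, update_of_ne this]
    · simp [hiS]
  rw [he]

theorem svol_insert (F : (ι → ℝ) → M) {K : Finset ι} {j : ι} (hj : j ∉ K)
    (a b : ι → ℝ) :
    svol F (insert j K) a b = svol F K (update a j (b j)) b - svol F K a b := by
  unfold svol
  rw [Finset.sum_powerset_insert hj, Finset.card_insert_of_notMem hj]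
  have h1 : ∀ S ∈ K.powerset,
      (-1 : ℤ) ^ (K.card + 1 - S.card) • F (fun i => if i ∈ S then b i else a i)
      = -((-1 : ℤ) ^ (K.card - S.card) • F (fun i => if i ∈ S then b i else a i)) := by
    intro S hS
    have hle : S.card ≤ K.card := Finset.card_le_card (Finset.mem_powerset.1 hS)
    rw [Nat.succ_sub hle, pow_succ, mul_comm, neg_one_mul, neg_smul]
  have h2 : ∀ S ∈ K.powerset,
      (-1 : ℤ) ^ (K.card + 1 - (insert j S).card) •
        F (fun i => if i ∈ insert j S then b i else a i)
      = (-1 : ℤ) ^ (K.card - S.card) •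
        F (fun i => if i ∈ S then b i else update a j (b j) i) := by
    intro S hS
    have hjS : j ∉ S := fun h => hj (Finset.mem_powerset.1 hS h)
    rw [Finset.card_insert_of_notMem hjS]
    have : K.card + 1 - (S.card + 1) = K.card - S.card := by omega
    rw [this]
    have he : (fun i => if i ∈ insert j S then b i else a i)
        = (fun i => if i ∈ S then b i else update a j (b j) i) := by
      funext i
      by_cases hij : i = j
      · subst hij
        simp [hjS, Finset.mem_insert]
      · by_cases hiS : i ∈ S
        · simp [hiS, Finset.mem_insert, hij]
        · simp [hiS, Finset.mem_insert, hij, update_of_ne hij]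
    rw [he]
  rw [Finset.sum_congr rfl h1, Finset.sum_congr rfl h2, Finset.sum_neg_distrib]
  abel

theorem neg_signed_le {m : ℕ} {x : M} (hx : 0 ≤ x) : -(((-1 : ℤ) ^ m) • x) ≤ x := by
  rcases Nat.even_or_odd m with h | h
  · rw [h.neg_one_pow, one_smul]
    exact le_trans (neg_nonpos.2 hx) hx
  · rw [h.neg_one_pow, neg_smul, one_smul, neg_neg]

theorem svol_nonneg {F : (ι → ℝ) → M}
    (hmem : ∀ t, 0 ≤ F t)
    (hvol : ∀ a b : ι → ℝ, (∀ i, a i ≤ b i) → 0 ≤ Paper.volSum F a b)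
    (hlc : ∀ t, IsLUB (F '' {s | ∀ i, s i < t i}) (F t))
    (hcz : ∀ (j : ι) (t : ι → ℝ), IsGLB (Set.range fun r => F (update t j r)) 0) :
    ∀ (m : ℕ) (K : Finset ι), (Finset.univ \ K).card ≤ m →
      ∀ a b : ι → ℝ, (∀ i, a i ≤ b i) → 0 ≤ svol F K a b := by
  intro m
  induction m with
  | zero =>
    intro K hK a b hab
    have hKu : K = Finset.univ := by
      have h0 : Finset.univ \ K = ∅ := Finset.card_eq_zero.1 (Nat.le_zero.1 hK)
      apply Finset.eq_univ_of_forall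
      intro i
      by_contra hi
      have hmem' : i ∈ Finset.univ \ K := Finset.mem_sdiff.2 ⟨Finset.mem_univ i, hi⟩
      rw [h0] at hmem'
      exact Finset.notMem_empty i hmem'
    rw [hKu, svol_univ]
    exact hvol a b hab
  | succ m ih =>
    intro K hK a b hab
    by_cases hKu : K = Finset.univ
    · rw [hKu, svol_univ]; exact hvol a b hab
    · obtain ⟨j, hj⟩ : ∃ j, j ∉ K := by
        by_contra h
        push_neg at h
        exact hKu (Finset.eq_univ_of_forall h)
      have hcard : (Finset.univ \ insert j K).card ≤ m := by
        have hjmem : j ∈ Finset.univ \ K := Finset.mem_sdiff.2 ⟨Finset.mem_univ j, hj⟩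
        have : Finset.univ \ insert j K = (Finset.univ \ K).erase j := by
          rw [Finset.sdiff_insert]
        rw [this, Finset.card_erase_of_mem hjmem]
        omega
      have key : ∀ c : ℝ,
          svol F K a b = svol F (insert j K) (update a j (min c (a j))) (update b j (a j))
            + svol F K (update a j (min c (a j))) b := by
        intro c
        have h1 := svol_insert F hj (update a j (min c (a j))) (update b j (a j))
        have h2 : update (update a j (min c (a j))) j (update b j (a j) j) = a := by
          rw [update_idem, update_self, update_eq_self]
        rw [h2] at h1
        have h3 : svol F K a (update b j (a j)) = svol F K a b := svol_b_congr F hj a b _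
        have h4 : svol F K (update a j (min c (a j))) (update b j (a j))
            = svol F K (update a j (min c (a j))) b := svol_b_congr F hj _ b _
        rw [h3, h4] at h1
        rw [eq_sub_iff_add_eq] at h1
        exact h1.symm
      have corner : ∀ (c : ℝ) (S : Finset ι), S ∈ K.powerset →
          (fun i => if i ∈ S then b i else update a j (min c (a j)) i)
          = update (fun i => if i ∈ S then b i else a i) j (min c (a j)) := by
        intro c S hS
        have hjS : j ∉ S := fun h => hj (Finset.mem_powerset.1 hS h)
        funext i
        by_cases hij : i = j
        · subst hij; simp [hjS]
        · by_cases hiS : i ∈ S <;> simp [hiS, hij, update_of_ne hij]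
      have hFm : ∀ {s u : ι → ℝ}, (∀ i, s i ≤ u i) → F s ≤ F u := fun h => F_mono hlc h
      have bound : ∀ c : ℝ, -svol F K a b ≤
          ∑ S ∈ K.powerset, F (update (fun i => if i ∈ S then b i else a i) j (min c (a j))) := by
        intro c
        have hpos : 0 ≤ svol F (insert j K) (update a j (min c (a j))) (update b j (a j)) := by
          apply ih _ hcard
          intro i
          by_cases hij : i = j
          · subst hij; simp [min_le_right]
          · simp [update_of_ne hij]; exact hab i
        have hge : svol F K (update a j (min c (a j))) b ≤ svol F K a b := by
          rw [key c]; exact le_add_of_nonneg_left hpos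
        have hneg : -svol F K a b ≤ -svol F K (update a j (min c (a j))) b := neg_le_neg hge
        refine hneg.trans ?_
        unfold svol
        rw [← Finset.sum_neg_distrib]
        apply Finset.sum_le_sum
        intro S hS
        rw [corner c S hS]
        exact neg_signed_le (hmem _)
      have hx : -svol F K a b ≤ 0 := by
        apply peel K.powerset
          (fun S c => F (update (fun i => if i ∈ S then b i else a i) j (min c (a j))))
        · intro S c₁ c₂ hc
          apply hFm
          intro i
          by_cases hij : i = j
          · subst hij
            simp only [update_self]
            exact min_le_min hc le_rfl
          · simp [update_of_ne hij]
        · intro S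
          constructor
          · rintro _ ⟨c, rfl⟩; exact hmem _
          · intro z hz
            refine (hcz j (fun i => if i ∈ S then b i else a i)).2 ?_
            rintro _ ⟨r, rfl⟩
            refine le_trans (hz ⟨r, rfl⟩) (hFm ?_)
            intro i
            by_cases hij : i = j
            · subst hij; simp [min_le_left]
            · simp [update_of_ne hij]
        · exact bound
      exact neg_nonpos.1 hx

theorem svol_singleton (F : (ι → ℝ) → M) (j : ι) (a b : ι → ℝ) :
    svol F {j} a b = F (update a j (b j)) - F a := by
  have : ({j} : Finset ι) = insert j ∅ := rfl
  rw [this, svol_insert F (Finset.notMem_empty j), svol_empty, svol_empty]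

theorem svol_pair (F : (ι → ℝ) → M) {i j : ι} (hij : i ≠ j) (a b : ι → ℝ) :
    svol F {i, j} a b =
      (F (update (update a i (b i)) j (b j)) - F (update a i (b i)))
      - (F (update a j (b j)) - F a) := by
  have h1 : ({i, j} : Finset ι) = insert i {j} := rfl
  have hi : i ∉ ({j} : Finset ι) := by simp [hij]
  rw [h1, svol_insert F hi, svol_singleton, svol_singleton]

/-- a single-coordinate difference is monotone in the base point -/
theorem D_mono {F : (ι → ℝ) → M}
    (hsv : ∀ (K : Finset ι) (a b : ι → ℝ), (∀ i, a i ≤ b i) → 0 ≤ svol F K a b)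
    {i : ι} {r r' : ℝ} (hr : r ≤ r') {h h' : ι → ℝ} (hh : ∀ l, h l ≤ h' l) :
    F (update h i r') - F (update h i r) ≤ F (update h' i r') - F (update h' i r) := by
  classical
  have key : ∀ T : Finset ι,
      F (update h i r') - F (update h i r) ≤
        F (update (fun l => if l ∈ T then h' l else h l) i r')
          - F (update (fun l => if l ∈ T then h' l else h l) i r) := by
    intro T
    induction T using Finset.induction_on with
    | empty => simp
    | @insert j T hjT ih =>
      set g : ι → ℝ := fun l => if l ∈ T then h' l else h l with hg
      have hgins : (fun l => if l ∈ insert j T then h' l else h l) = update g j (h' j) := by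
        funext l
        by_cases hlj : l = j
        · subst hlj; simp [hjT]
        · by_cases hlT : l ∈ T <;> simp [Finset.mem_insert, hlj, hlT, update_of_ne hlj, hg]
      rw [hgins]
      by_cases hji : j = i
      · subst hji
        have e1 : update (update g j (h' j)) j r' = update g j r' := update_idem ..
        have e2 : update (update g j (h' j)) j r = update g j r := update_idem ..
        rw [e1, e2]
        exact ih
      · have hij' : i ≠ j := fun e => hji e.symm
        have hji' : j ≠ i := fun e => hji e
        have hstep := hsv {j, i} (update g i r)
          (update (update g i r') j (h' j)) ?ptwise
        case ptwise =>
          intro l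
          by_cases hli : l = i
          · subst hli
            rw [update_self, update_of_ne hij', update_self]
            exact hr
          · by_cases hlj : l = j
            · subst hlj
              rw [update_of_ne hji', update_self, hg]
              simp [hjT]
              exact hh l
            · rw [update_of_ne hli, update_of_ne hlj, update_of_ne hli]
        rw [svol_pair F hji'] at hstep
        have eb_j : update (update g i r') j (h' j) j = h' j := update_self ..
        have eb_i : update (update g i r') j (h' j) i = r' := by
          rw [update_of_ne hij', update_self]
        rw [eb_j, eb_i] at hstep
        have e1 : update (update g i r) j (h' j) = update (update g j (h' j)) i r :=
          update_comm hij' r (h' j) g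
        rw [e1] at hstep
        simp only [update_idem] at hstep
        exact ih.trans (sub_nonneg.1 hstep)
  have hfin := key Finset.univ
  simpa using hfin

/-- supermodularity -/
theorem supermod {F : (ι → ℝ) → M}
    (hsv : ∀ (K : Finset ι) (a b : ι → ℝ), (∀ i, a i ≤ b i) → 0 ≤ svol F K a b)
    (x y : ι → ℝ) :
    F x + F y ≤ F (fun i => max (x i) (y i)) + F (fun i => min (x i) (y i)) := by
  classical
  have key : ∀ T : Finset ι,
      F (fun i => if i ∈ T then x i else min (x i) (y i)) + F y ≤
        F (fun i => if i ∈ T then max (x i) (y i) else y i) + F (fun i => min (x i) (y i)) := by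
    intro T
    induction T using Finset.induction_on with
    | empty => simp [add_comm]
    | @insert j T hjT ih =>
      set nT : ι → ℝ := fun i => if i ∈ T then x i else min (x i) (y i) with hnT
      set mT : ι → ℝ := fun i => if i ∈ T then max (x i) (y i) else y i with hmT
      have hnins : (fun i => if i ∈ insert j T then x i else min (x i) (y i))
          = update nT j (x j) := by
        funext l
        by_cases hlj : l = j
        · subst hlj; simp [hjT]
        · by_cases hlT : l ∈ T <;>
            simp [Finset.mem_insert, hlj, hlT, update_of_ne hlj, hnT]
      have hmins : (fun i => if i ∈ insert j T then max (x i) (y i) else y i)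
          = update mT j (max (x j) (y j)) := by
        funext l
        by_cases hlj : l = j
        · subst hlj; simp [hjT]
        · by_cases hlT : l ∈ T <;>
            simp [Finset.mem_insert, hlj, hlT, update_of_ne hlj, hmT]
      rw [hnins, hmins]
      have hnTj : nT = update nT j (min (x j) (y j)) := by
        rw [hnT]; funext l
        by_cases hlj : l = j
        · subst hlj; simp [hjT]
        · simp [update_of_ne hlj]
      have hmTj : mT = update mT j (y j) := by
        rw [hmT]; funext l
        by_cases hlj : l = j
        · subst hlj; simp [hjT]
        · simp [update_of_ne hlj]
      have hstep : F (update nT j (x j)) - F nT ≤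
          F (update mT j (max (x j) (y j))) - F mT := by
        by_cases hxy : x j ≤ y j
        · have e1 : update nT j (x j) = nT := by
            funext l
            by_cases hlj : l = j
            · subst hlj; simp [hnT, hjT, min_eq_left hxy]
            · simp [update_of_ne hlj]
          have e2 : update mT j (max (x j) (y j)) = mT := by
            funext l
            by_cases hlj : l = j
            · subst hlj; simp [hmT, hjT, max_eq_right hxy]
            · simp [update_of_ne hlj]
          rw [e1, e2]
          simp
        · push_neg at hxy
          have e1 : nT = update nT j (y j) := by
            funext l
            by_cases hlj : l = j
            · subst hlj; simp [hnT, hjT, min_eq_right hxy.le]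
            · simp [update_of_ne hlj]
          have e2 : update mT j (max (x j) (y j)) = update mT j (x j) := by
            rw [max_eq_left hxy.le]
          rw [e2]
          conv_lhs => rw [show F nT = F (update nT j (y j)) from congrArg F e1]
          conv_rhs => rw [show F mT = F (update mT j (y j)) from congrArg F hmTj]
          refine D_mono hsv hxy.le ?_
          intro l
          by_cases hlT : l ∈ T
          · simp [hnT, hmT, hlT, le_max_left]
          · simp [hnT, hmT, hlT, min_le_right]
      have hsum := add_le_add ih hstep
      have h3 : F (update nT j (x j)) + F y =
          (F nT + F y) + (F (update nT j (x j)) - F nT) := by abel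
      have h4 : F (update mT j (max (x j) (y j))) + F (fun i => min (x i) (y i)) =
          (F mT + F (fun i => min (x i) (y i))) + (F (update mT j (max (x j) (y j))) - F mT) := by
        abel
      rw [h3, h4]
      exact hsum
  have hfin := key Finset.univ
  simpa using hfin

end Lemmas

open Paper in
/-- Lemma 2.1: for an `n`-dimensional spectral resolution `F` on the
perfect effect algebra `E = Γ_ea(ℤ ×ₗ G,(1,0))`, the supremum of `F` over any nonempty
set `J` of coordinates (the remaining coordinates being held fixed at `t`) exists in `E`. -/
theorem statement_0 {G : Type*} [AddCommGroup G] [PartialOrder G]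
    [CovariantClass G G (· + ·) (· ≤ ·)]
    (hdir : DirectedPO G) (hip : RieszInterp G) (hsc : MonSigmaComplete G)
    {n : ℕ} (F : (Fin n → ℝ) → ℤ ×ₗ G) (hF : IsSR1 F)
    (J : Finset (Fin n)) (hJ : J.Nonempty) (t : Fin n → ℝ) :
    ∃ u ∈ Ek G 1, IsLUB (F '' {s | ∀ i ∉ J, s i = t i}) u := by
  classical
  have hmono : ∀ {s u : Fin n → ℝ}, (∀ i, s i ≤ u i) → F s ≤ F u :=
    fun h => F_mono hF.leftCont h
  have hmem0 : ∀ s, (0 : ℤ ×ₗ G) ≤ F s := fun s => (hF.mem s).1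
  have hmem1 : ∀ s, F s ≤ toLex (1, (0 : G)) := fun s => (hF.mem s).2
  have hsv : ∀ (K : Finset (Fin n)) (a b : Fin n → ℝ), (∀ i, a i ≤ b i) → 0 ≤ svol F K a b :=
    fun K a b hab =>
      svol_nonneg hmem0 hF.vol hF.leftCont hF.coordZero (Finset.univ \ K).card K le_rfl a b hab
  obtain ⟨t0, hchar, -⟩ := hF.charPt
  obtain ⟨k₀, hk₀⟩ := exists_nat_gt (J.sup' hJ t0)
  have hk₀' : ∀ i ∈ J, t0 i < (k₀ : ℝ) := fun i hi =>
    lt_of_le_of_lt (Finset.le_sup' t0 hi) hk₀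
  set A : Set (Fin n → ℝ) := {s | ∀ i ∉ J, s i = t i} with hA
  set sq : ℕ → (Fin n → ℝ) := fun k i => if i ∈ J then ((k₀ + k : ℕ) : ℝ) else t i with hsq
  have hsqA : ∀ k, sq k ∈ A := by
    intro k i hi
    simp [hsq, hi]
  set z : ℕ → ℤ ×ₗ G := fun k => F (sq k) with hz
  have hzmono : Monotone z := by
    intro k k' hk
    apply hmono
    intro i
    by_cases hi : i ∈ J
    · simp only [hsq, hi, if_pos]
      exact_mod_cast Nat.add_le_add_left hk k₀
    · simp [hsq, hi]
  have hdom : ∀ s ∈ A, ∃ k, F s ≤ z k := by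
    intro s hs
    obtain ⟨k, hk⟩ := exists_nat_ge (J.sup' hJ s)
    refine ⟨k, hmono fun i => ?_⟩
    by_cases hi : i ∈ J
    · simp only [hsq, hi, if_pos]
      have h1 : s i ≤ (k : ℝ) := le_trans (Finset.le_sup' s hi) hk
      have h2 : (k : ℝ) ≤ ((k₀ + k : ℕ) : ℝ) := by
        push_cast
        linarith [Nat.cast_nonneg (α := ℝ) k₀]
      linarith
    · simp [hsq, hi, hs i hi]
  have transfer : ∀ u, IsLUB (Set.range z) u → IsLUB (F '' A) u := by
    intro u hu
    constructor
    · rintro v ⟨s, hs, rfl⟩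
      obtain ⟨k, hk⟩ := hdom s hs
      exact hk.trans (hu.1 ⟨k, rfl⟩)
    · intro w hw
      refine hu.2 ?_
      rintro _ ⟨k, rfl⟩
      exact hw ⟨sq k, hsqA k, rfl⟩
  have hfstJ : ∀ (k : ℕ) (i : Fin n), i ∈ J → t0 i < sq k i := by
    intro k i hi
    simp only [hsq, hi, if_pos]
    have : (k₀ : ℝ) ≤ ((k₀ + k : ℕ) : ℝ) := by
      push_cast
      linarith [Nat.cast_nonneg (α := ℝ) k]
    exact lt_of_lt_of_le (hk₀' i hi) this
  by_cases hcase : ∀ i, i ∉ J → t0 i < t i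
  · -- Case 1 : all first components are 1
    have hfst : ∀ k, (ofLex (z k)).1 = 1 := by
      intro k
      refine (hchar (sq k)).2 fun i => ?_
      by_cases hi : i ∈ J
      · exact hfstJ k i hi
      · have : sq k i = t i := by simp [hsq, hi]
        rw [this]
        exact hcase i hi
    set g : ℕ → G := fun k => (ofLex (z k)).2 with hg
    have hgmono : Monotone g := by
      intro k k' hk
      exact lex_le_snd' (hzmono hk) (by rw [hfst, hfst])
    have hgbdd : BddAbove (Set.range g) := by
      refine ⟨0, ?_⟩
      rintro _ ⟨k, rfl⟩
      have := lex_le_snd' (hmem1 (sq k)) (by rw [hfst k]; rfl)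
      exact this
    obtain ⟨gs, hgs⟩ := hsc.1 g hgmono hgbdd
    have hgs0 : gs ≤ 0 := by
      apply hgs.2
      rintro _ ⟨k, rfl⟩
      exact lex_le_snd' (hmem1 (sq k)) (by rw [hfst k]; rfl)
    refine ⟨toLex (1, gs), ⟨?_, ?_⟩, transfer _ ⟨?_, ?_⟩⟩
    · exact (lex_le_iff' 0 (toLex (1, gs))).2 (Or.inl (by norm_num))
    · exact (lex_le_iff' (toLex (1, gs)) (toLex (1, (0:G)))).2 (Or.inr ⟨rfl, hgs0⟩)
    · rintro _ ⟨k, rfl⟩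
      exact (lex_le_iff' (z k) (toLex (1, gs))).2 (Or.inr ⟨hfst k, hgs.1 ⟨k, rfl⟩⟩)
    · intro v hv
      have h0 : z 0 ≤ v := hv ⟨0, rfl⟩
      have hv1 : (1 : ℤ) ≤ (ofLex v).1 := by
        have := lex_fst_mono' h0
        rwa [hfst 0] at this
      rcases lt_or_eq_of_le hv1 with h1 | h1
      · exact (lex_le_iff' (toLex (1, gs)) v).2 (Or.inl h1)
      · refine (lex_le_iff' (toLex (1, gs)) v).2 (Or.inr ⟨h1, ?_⟩)
        apply hgs.2
        rintro _ ⟨k, rfl⟩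
        exact lex_le_snd' (hv ⟨k, rfl⟩) (by rw [hfst k, ← h1])
  · -- Case 2 : all first components are 0
    push_neg at hcase
    obtain ⟨i₀, hi₀J, hi₀⟩ := hcase
    have hfst : ∀ k, (ofLex (z k)).1 = 0 := by
      intro k
      have hne : (ofLex (z k)).1 ≠ 1 := by
        intro h
        have := ((hchar (sq k)).1 h) i₀
        have he : sq k i₀ = t i₀ := by simp [hsq, hi₀J]
        rw [he] at this
        exact absurd this (not_lt.2 hi₀)
      have h0 : (0 : ℤ) ≤ (ofLex (z k)).1 := lex_fst_mono' (hmem0 (sq k))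
      have h1 : (ofLex (z k)).1 ≤ 1 := lex_fst_mono' (hmem1 (sq k))
      omega
    set w : Fin n → ℝ := fun i => if i ∈ J then (k₀ : ℝ) else t0 i + 1 with hw
    set v : Fin n → ℝ := fun i => if i ∈ J then (k₀ : ℝ) else min (t i) (t0 i + 1) with hv
    have hfstw : (ofLex (F w)).1 = 1 := by
      refine (hchar w).2 fun i => ?_
      by_cases hi : i ∈ J
      · simp only [hw, hi, if_pos]
        exact hk₀' i hi
      · simp only [hw, hi, if_neg, ite_false]
        simp [hi]
    have hfstv : (ofLex (F v)).1 = 0 := by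
      have hne : (ofLex (F v)).1 ≠ 1 := by
        intro h
        have := ((hchar v).1 h) i₀
        have he : v i₀ = min (t i₀) (t0 i₀ + 1) := by simp [hv, hi₀J]
        rw [he] at this
        have : t0 i₀ < t i₀ := lt_of_lt_of_le this (min_le_left _ _)
        exact absurd this (not_lt.2 hi₀)
      have h0 : (0 : ℤ) ≤ (ofLex (F v)).1 := lex_fst_mono' (hmem0 v)
      have h1 : (ofLex (F v)).1 ≤ 1 := lex_fst_mono' (hmem1 v)
      omega
    set u₀ : ℤ ×ₗ G := toLex (1, (0 : G)) + F v - F w with hu₀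
    have hzbd : ∀ k, z k ≤ u₀ := by
      intro k
      have hsup := supermod hsv (sq k) w
      have hminvw : (fun i => min (sq k i) (w i)) = v := by
        funext i
        by_cases hi : i ∈ J
        · simp only [hsq, hw, hv, hi, if_pos]
          have : (k₀ : ℝ) ≤ ((k₀ + k : ℕ) : ℝ) := by
            push_cast
            linarith [Nat.cast_nonneg (α := ℝ) k]
          exact min_eq_right this
        · simp [hsq, hw, hv, hi]
      rw [hminvw] at hsup
      have hstep : F (sq k) + F w ≤ toLex (1, (0:G)) + F v :=
        hsup.trans (add_le_add_left (hmem1 _) _)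
      rw [hu₀]
      rw [le_sub_iff_add_le]
      exact hstep
    have hfstu₀ : (ofLex u₀).1 = 0 := by
      have : (ofLex u₀).1 = 1 + (ofLex (F v)).1 - (ofLex (F w)).1 := rfl
      rw [this, hfstv, hfstw]
      norm_num
    set g : ℕ → G := fun k => (ofLex (z k)).2 with hg
    have hgmono : Monotone g := by
      intro k k' hk
      exact lex_le_snd' (hzmono hk) (by rw [hfst, hfst])
    have hgbdd : BddAbove (Set.range g) := by
      refine ⟨(ofLex u₀).2, ?_⟩
      rintro _ ⟨k, rfl⟩
      exact lex_le_snd' (hzbd k) (by rw [hfst k, hfstu₀])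
    obtain ⟨gs, hgs⟩ := hsc.1 g hgmono hgbdd
    have hgs0 : (0 : G) ≤ gs := by
      refine le_trans ?_ (hgs.1 ⟨0, rfl⟩)
      exact lex_le_snd' (hmem0 (sq 0)) (by rw [hfst 0]; rfl)
    refine ⟨toLex (0, gs), ⟨?_, ?_⟩, transfer _ ⟨?_, ?_⟩⟩
    · exact (lex_le_iff' 0 (toLex (0, gs))).2 (Or.inr ⟨rfl, hgs0⟩)
    · exact (lex_le_iff' (toLex (0, gs)) (toLex (1, (0:G)))).2 (Or.inl (by norm_num))
    · rintro _ ⟨k, rfl⟩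
      exact (lex_le_iff' (z k) (toLex (0, gs))).2 (Or.inr ⟨hfst k, hgs.1 ⟨k, rfl⟩⟩)
    · intro vb hvb
      have h0 : z 0 ≤ vb := hvb ⟨0, rfl⟩
      have hv1 : (0 : ℤ) ≤ (ofLex vb).1 := by
        have := lex_fst_mono' h0
        rwa [hfst 0] at this
      rcases lt_or_eq_of_le hv1 with h1 | h1
      · exact (lex_le_iff' (toLex (0, gs)) vb).2 (Or.inl h1)
      · refine (lex_le_iff' (toLex (0, gs)) vb).2 (Or.inr ⟨h1, ?_⟩)
        apply hgs.2
        rintro _ ⟨k, rfl⟩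
        exact lex_le_snd' (hvb ⟨k, rfl⟩) (by rw [hfst k, ← h1])
end

section
/- Let G be a directed partially ordered abelian group with the Riesz interpolation property which is Dedekind monotone σ-complete, let g₀ ∈ G with g₀ ≥ 0, let k ≥ 1, and let E = {a ∈ ℤ ×ₗ G : (0,0) ≤ a ≤ (k,−g₀)}. Let (aᵢ), (bᵢ), (cᵢ), (dᵢ) be sequences in E. (1) If all four sequences are nondecreasing with least upper bounds a, b, c, d respectively, and the sequence (aᵢ + dᵢ − bᵢ − cᵢ) is nondecreasing and takes values in E, then a + d − b − c lies in E and is the least upper bound of (aᵢ + dᵢ − bᵢ − cᵢ). (2) If all four sequences are nonincreasing with greatest lower bounds a, b, c, d, and (aᵢ + dᵢ − bᵢ − cᵢ) is nonincreasing with values in E, then a + d − b − c lies in E and is the greatest lower bound of (aᵢ + dᵢ − bᵢ − cᵢ). (3) If all four sequences are nondecreasing with least upper bounds a, b, c, d, and (aᵢ + dᵢ − bᵢ − cᵢ) is nonincreasing with values in E, then a + d − b − c lies in E and is the greatest lower bound of (aᵢ + dᵢ − bᵢ − cᵢ). (4) If all four sequences are nonincreasing with greatest lower bounds a, b, c, d,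 and (aᵢ + dᵢ − bᵢ − cᵢ) is nondecreasing with values in E, then a + d − b − c lies in E and is the least upper bound of (aᵢ + dᵢ − bᵢ − cᵢ). Moreover, the same four statements hold with E replaced by the order interval {a ∈ G : 0 ≤ a ≤ u} for u ∈ G⁺. -/
open Classical

set_option linter.unusedSectionVars false

section Aux
variable {M : Type*} [AddCommGroup M] [PartialOrder M]
  [CovariantClass M M (· + ·) (· ≤ ·)]

lemma aux_neg_le {a b : M} (h : a ≤ b) : -b ≤ -a := by
  have h' := add_le_add_right h (-a - b)
  have e1 : -a - b + a = -b := by abel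
  have e2 : -a - b + b = -a := by abel
  rwa [e1, e2] at h'

lemma aux_lub_add {a d : ℕ → M} {A D : M} (ma : Monotone a) (md : Monotone d)
    (hA : IsLUB (Set.range a) A) (hD : IsLUB (Set.range d) D) :
    IsLUB (Set.range fun i => a i + d i) (A + D) := by
  constructor
  · rintro _ ⟨i, rfl⟩
    exact add_le_add (hA.1 ⟨i, rfl⟩) (hD.1 ⟨i, rfl⟩)
  · intro x hx
    have key : ∀ i j, a i + d j ≤ x := by
      intro i j
      have h1 : a i + d j ≤ a (max i j) + d (max i j) :=
        add_le_add (ma (le_max_left i j)) (md (le_max_right i j))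
      exact h1.trans (hx ⟨max i j, rfl⟩)
    have h1 : ∀ j, A ≤ x - d j := by
      intro j
      refine hA.2 ?_
      rintro _ ⟨i, rfl⟩
      exact le_sub_iff_add_le.2 (key i j)
    have h2 : D ≤ x - A := by
      refine hD.2 ?_
      rintro _ ⟨j, rfl⟩
      have := le_sub_iff_add_le.1 (h1 j)
      rw [add_comm] at this
      exact le_sub_iff_add_le.2 this
    have := le_sub_iff_add_le.1 h2
    rwa [add_comm] at this

lemma aux_lub_neg {f : ℕ → M} {A : M} (h : IsGLB (Set.range f) A) :
    IsLUB (Set.range fun i => -f i) (-A) := by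
  constructor
  · rintro _ ⟨i, rfl⟩
    exact aux_neg_le (h.1 ⟨i, rfl⟩)
  · intro x hx
    have : x ∈ lowerBounds (Set.range f) → True := fun _ => trivial
    have hlb : -x ∈ lowerBounds (Set.range f) := by
      rintro _ ⟨i, rfl⟩
      have := aux_neg_le (hx ⟨i, rfl⟩)
      simpa using this
    have := aux_neg_le (h.2 hlb)
    simpa using this

lemma aux_glb_neg {f : ℕ → M} {A : M} (h : IsLUB (Set.range f) A) :
    IsGLB (Set.range fun i => -f i) (-A) := by
  constructor
  · rintro _ ⟨i, rfl⟩
    exact aux_neg_le (h.1 ⟨i, rfl⟩)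
  · intro x hx
    have hub : -x ∈ upperBounds (Set.range f) := by
      rintro _ ⟨i, rfl⟩
      have := aux_neg_le (hx ⟨i, rfl⟩)
      simpa using this
    have := aux_neg_le (h.2 hub)
    simpa using this

/-- Case (1): monotone sequences, monotone combination. -/
lemma aux_key1 {a b c d : ℕ → M} {A B C D : M}
    (ma : Monotone a) (mb : Monotone b) (mc : Monotone c) (md : Monotone d)
    (hA : IsLUB (Set.range a) A) (hB : IsLUB (Set.range b) B)
    (hC : IsLUB (Set.range c) C) (hD : IsLUB (Set.range d) D)
    (me : Monotone fun i => a i + d i - b i - c i) :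
    IsLUB (Set.range fun i => a i + d i - b i - c i) (A + D - B - C) := by
  set e : ℕ → M := fun i => a i + d i - b i - c i with he
  set f : ℕ → M := fun i => b i + c i with hf
  have hg : IsLUB (Set.range fun i => a i + d i) (A + D) := aux_lub_add ma md hA hD
  have hF : IsLUB (Set.range f) (B + C) := aux_lub_add mb mc hB hC
  have hef : ∀ i, e i + f i = a i + d i := by intro i; simp only [he, hf]; abel
  have hrw : A + D - B - C = (A + D) - (B + C) := by abel
  rw [hrw]
  constructor
  · rintro _ ⟨i, rfl⟩
    -- e i ≤ (A+D) - (B+C)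
    have h1 : B + C ≤ (A + D) - e i := by
      refine hF.2 ?_
      rintro _ ⟨j, rfl⟩
      refine le_sub_iff_add_le.2 ?_
      have h2 : f j + e i ≤ f (max i j) + e (max i j) :=
        add_le_add (add_le_add (mb (le_max_right i j)) (mc (le_max_right i j)))
          (me (le_max_left i j))
      have h3 : f (max i j) + e (max i j) = a (max i j) + d (max i j) := by
        rw [add_comm]; exact hef _
      exact (h2.trans_eq h3).trans (hg.1 ⟨max i j, rfl⟩)
    have := le_sub_iff_add_le.1 h1
    rw [add_comm] at this
    exact le_sub_iff_add_le.2 this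
  · intro x hx
    refine sub_le_iff_le_add.2 (hg.2 ?_)
    rintro _ ⟨m, rfl⟩
    show a m + d m ≤ x + (B + C)
    rw [(hef m).symm]
    exact add_le_add (hx ⟨m, rfl⟩) (hF.1 ⟨m, rfl⟩)

/-- Case (3): monotone sequences, antitone combination. -/
lemma aux_key3 {a b c d : ℕ → M} {A B C D : M}
    (ma : Monotone a) (mb : Monotone b) (mc : Monotone c) (md : Monotone d)
    (hA : IsLUB (Set.range a) A) (hB : IsLUB (Set.range b) B)
    (hC : IsLUB (Set.range c) C) (hD : IsLUB (Set.range d) D)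
    (me : Antitone fun i => a i + d i - b i - c i) :
    IsGLB (Set.range fun i => a i + d i - b i - c i) (A + D - B - C) := by
  set e : ℕ → M := fun i => a i + d i - b i - c i with he
  set f : ℕ → M := fun i => b i + c i with hf
  have mf : Monotone f := fun i j h => add_le_add (mb h) (mc h)
  have hg : IsLUB (Set.range fun i => a i + d i) (A + D) := aux_lub_add ma md hA hD
  have hF : IsLUB (Set.range f) (B + C) := aux_lub_add mb mc hB hC
  have hef : ∀ i, e i + f i = a i + d i := by intro i; simp only [he, hf]; abel
  have hrw : A + D - B - C = (A + D) - (B + C) := by abel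
  rw [hrw]
  constructor
  · rintro _ ⟨i, rfl⟩
    -- (A+D)-(B+C) ≤ e i, i.e. A + D ≤ e i + (B+C)
    refine sub_le_iff_le_add.2 (hg.2 ?_)
    rintro _ ⟨m, rfl⟩
    have h1 : a m + d m ≤ a (max m i) + d (max m i) :=
      add_le_add (ma (le_max_left m i)) (md (le_max_left m i))
    have h2 : a (max m i) + d (max m i) = e (max m i) + f (max m i) := (hef _).symm
    have h3 : e (max m i) + f (max m i) ≤ e i + (B + C) :=
      add_le_add (me (le_max_right m i)) (hF.1 ⟨max m i, rfl⟩)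
    exact (h1.trans_eq h2).trans h3
  · intro x hx
    -- x ≤ (A+D)-(B+C), i.e. x + (B+C) ≤ A+D
    have h1 : B + C ≤ (A + D) - x := by
      refine hF.2 ?_
      rintro _ ⟨j, rfl⟩
      refine le_sub_iff_add_le.2 ?_
      have : f j + x ≤ f j + e j := add_le_add_right (hx ⟨j, rfl⟩) _
      rw [add_comm (f j) (e j)] at this
      exact (this.trans_eq (hef j)).trans (hg.1 ⟨j, rfl⟩)
    have := le_sub_iff_add_le.1 h1
    rw [add_comm] at this
    exact le_sub_iff_add_le.2 this

lemma memIcc_of_isLUB {e : ℕ → M} {E T : M}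
    (hm : ∀ i, e i ∈ Set.Icc 0 T) (h : IsLUB (Set.range e) E) : E ∈ Set.Icc 0 T :=
  ⟨(hm 0).1.trans (h.1 ⟨0, rfl⟩), h.2 (by rintro _ ⟨i, rfl⟩; exact (hm i).2)⟩

lemma memIcc_of_isGLB {e : ℕ → M} {E T : M}
    (hm : ∀ i, e i ∈ Set.Icc 0 T) (h : IsGLB (Set.range e) E) : E ∈ Set.Icc 0 T :=
  ⟨h.2 (by rintro _ ⟨i, rfl⟩; exact (hm i).1), (h.1 ⟨0, rfl⟩).trans (hm 0).2⟩

/-- Case (2) from case (1) by negation. -/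
lemma aux_key2 {a b c d : ℕ → M} {A B C D : M}
    (ma : Antitone a) (mb : Antitone b) (mc : Antitone c) (md : Antitone d)
    (hA : IsGLB (Set.range a) A) (hB : IsGLB (Set.range b) B)
    (hC : IsGLB (Set.range c) C) (hD : IsGLB (Set.range d) D)
    (me : Antitone fun i => a i + d i - b i - c i) :
    IsGLB (Set.range fun i => a i + d i - b i - c i) (A + D - B - C) := by
  have hfun : (fun i => (-a i) + (-d i) - (-b i) - (-c i))
      = fun i => -(a i + d i - b i - c i) := by funext i; abel
  have me' : Monotone fun i => (-a i) + (-d i) - (-b i) - (-c i) := by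
    rw [hfun]; intro i j h; exact aux_neg_le (me h)
  have h := aux_key1 (fun i j h => aux_neg_le (ma h)) (fun i j h => aux_neg_le (mb h))
    (fun i j h => aux_neg_le (mc h)) (fun i j h => aux_neg_le (md h))
    (aux_lub_neg hA) (aux_lub_neg hB) (aux_lub_neg hC) (aux_lub_neg hD) me'
  rw [hfun] at h
  have heq : (-A) + (-D) - (-B) - (-C) = -(A + D - B - C) := by abel
  rw [heq] at h
  have h2 := aux_glb_neg h
  simpa using h2

/-- Case (4) from case (3) by negation. -/
lemma aux_key4 {a b c d : ℕ → M} {A B C D : M}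
    (ma : Antitone a) (mb : Antitone b) (mc : Antitone c) (md : Antitone d)
    (hA : IsGLB (Set.range a) A) (hB : IsGLB (Set.range b) B)
    (hC : IsGLB (Set.range c) C) (hD : IsGLB (Set.range d) D)
    (me : Monotone fun i => a i + d i - b i - c i) :
    IsLUB (Set.range fun i => a i + d i - b i - c i) (A + D - B - C) := by
  have hfun : (fun i => (-a i) + (-d i) - (-b i) - (-c i))
      = fun i => -(a i + d i - b i - c i) := by funext i; abel
  have me' : Antitone fun i => (-a i) + (-d i) - (-b i) - (-c i) := by
    rw [hfun]; intro i j h; exact aux_neg_le (me h)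
  have h := aux_key3 (fun i j h => aux_neg_le (ma h)) (fun i j h => aux_neg_le (mb h))
    (fun i j h => aux_neg_le (mc h)) (fun i j h => aux_neg_le (md h))
    (aux_lub_neg hA) (aux_lub_neg hB) (aux_lub_neg hC) (aux_lub_neg hD) me'
  rw [hfun] at h
  have heq : (-A) + (-D) - (-B) - (-C) = -(A + D - B - C) := by abel
  rw [heq] at h
  have h2 := aux_lub_neg h
  simpa using h2

end Aux

lemma lex_covariant {G : Type*} [AddCommGroup G] [PartialOrder G]
    [CovariantClass G G (· + ·) (· ≤ ·)] :
    CovariantClass (ℤ ×ₗ G) (ℤ ×ₗ G) (· + ·) (· ≤ ·) := by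
  constructor
  intro c a b h
  show c + a ≤ c + b
  have ha : c + a = toLex (ofLex c + ofLex a) := rfl
  have hb : c + b = toLex (ofLex c + ofLex b) := rfl
  rw [ha, hb, Prod.Lex.le_iff]
  rw [show a = toLex (ofLex a) from rfl, show b = toLex (ofLex b) from rfl,
    Prod.Lex.le_iff] at h
  rcases h with h | ⟨h1, h2⟩
  · left; exact add_lt_add_right h (ofLex c).1
  · right
    exact ⟨by simp only [ofLex_toLex] at h1 ⊢; simp [Prod.add_def, h1], add_le_add_right h2 (ofLex c).2⟩

open Paper in
/-- Lemma 2.2: limits of sequences of the form `aᵢ + dᵢ - bᵢ - cᵢ` in the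
interval `[0,(k,-g₀)]` of `ℤ ×ₗ G`, in the four monotonicity combinations; and the same
in an interval `[0,u]` of `G`. -/
theorem statement_1 {G : Type*} [AddCommGroup G] [PartialOrder G]
    [CovariantClass G G (· + ·) (· ≤ ·)]
    (hdir : DirectedPO G) (hip : RieszInterp G) (hsc : MonSigmaComplete G)
    (g₀ : G) (hg₀ : 0 ≤ g₀) (k : ℤ) (hk : 1 ≤ k) :
    -- (1) nondecreasing sequences, nondecreasing combination
    (∀ (a b c d : ℕ → ℤ ×ₗ G) (A B C D : ℤ ×ₗ G),
      (∀ i, a i ∈ Set.Icc 0 (toLex (k, -g₀))) → (∀ i, b i ∈ Set.Icc 0 (toLex (k, -g₀))) →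
      (∀ i, c i ∈ Set.Icc 0 (toLex (k, -g₀))) → (∀ i, d i ∈ Set.Icc 0 (toLex (k, -g₀))) →
      Monotone a → Monotone b → Monotone c → Monotone d →
      IsLUB (Set.range a) A → IsLUB (Set.range b) B →
      IsLUB (Set.range c) C → IsLUB (Set.range d) D →
      (∀ i, a i + d i - b i - c i ∈ Set.Icc 0 (toLex (k, -g₀))) →
      Monotone (fun i => a i + d i - b i - c i) →
      (A + D - B - C ∈ Set.Icc 0 (toLex (k, -g₀)) ∧
        IsLUB (Set.range fun i => a i + d i - b i - c i) (A + D - B - C))) ∧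
    -- (2) nonincreasing sequences, nonincreasing combination
    (∀ (a b c d : ℕ → ℤ ×ₗ G) (A B C D : ℤ ×ₗ G),
      (∀ i, a i ∈ Set.Icc 0 (toLex (k, -g₀))) → (∀ i, b i ∈ Set.Icc 0 (toLex (k, -g₀))) →
      (∀ i, c i ∈ Set.Icc 0 (toLex (k, -g₀))) → (∀ i, d i ∈ Set.Icc 0 (toLex (k, -g₀))) →
      Antitone a → Antitone b → Antitone c → Antitone d →
      IsGLB (Set.range a) A → IsGLB (Set.range b) B →
      IsGLB (Set.range c) C → IsGLB (Set.range d) D →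
      (∀ i, a i + d i - b i - c i ∈ Set.Icc 0 (toLex (k, -g₀))) →
      Antitone (fun i => a i + d i - b i - c i) →
      (A + D - B - C ∈ Set.Icc 0 (toLex (k, -g₀)) ∧
        IsGLB (Set.range fun i => a i + d i - b i - c i) (A + D - B - C))) ∧
    -- (3) nondecreasing sequences, nonincreasing combination
    (∀ (a b c d : ℕ → ℤ ×ₗ G) (A B C D : ℤ ×ₗ G),
      (∀ i, a i ∈ Set.Icc 0 (toLex (k, -g₀))) → (∀ i, b i ∈ Set.Icc 0 (toLex (k, -g₀))) →
      (∀ i, c i ∈ Set.Icc 0 (toLex (k, -g₀))) → (∀ i, d i ∈ Set.Icc 0 (toLex (k, -g₀))) →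
      Monotone a → Monotone b → Monotone c → Monotone d →
      IsLUB (Set.range a) A → IsLUB (Set.range b) B →
      IsLUB (Set.range c) C → IsLUB (Set.range d) D →
      (∀ i, a i + d i - b i - c i ∈ Set.Icc 0 (toLex (k, -g₀))) →
      Antitone (fun i => a i + d i - b i - c i) →
      (A + D - B - C ∈ Set.Icc 0 (toLex (k, -g₀)) ∧
        IsGLB (Set.range fun i => a i + d i - b i - c i) (A + D - B - C))) ∧
    -- (4) nonincreasing sequences, nondecreasing combination
    (∀ (a b c d : ℕ → ℤ ×ₗ G) (A B C D : ℤ ×ₗ G),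
      (∀ i, a i ∈ Set.Icc 0 (toLex (k, -g₀))) → (∀ i, b i ∈ Set.Icc 0 (toLex (k, -g₀))) →
      (∀ i, c i ∈ Set.Icc 0 (toLex (k, -g₀))) → (∀ i, d i ∈ Set.Icc 0 (toLex (k, -g₀))) →
      Antitone a → Antitone b → Antitone c → Antitone d →
      IsGLB (Set.range a) A → IsGLB (Set.range b) B →
      IsGLB (Set.range c) C → IsGLB (Set.range d) D →
      (∀ i, a i + d i - b i - c i ∈ Set.Icc 0 (toLex (k, -g₀))) →
      Monotone (fun i => a i + d i - b i - c i) →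
      (A + D - B - C ∈ Set.Icc 0 (toLex (k, -g₀)) ∧
        IsLUB (Set.range fun i => a i + d i - b i - c i) (A + D - B - C))) ∧
    -- the same four statements in an interval `[0,u]` of `G` itself
    (∀ u : G, 0 ≤ u →
      (∀ (a b c d : ℕ → G) (A B C D : G),
        (∀ i, a i ∈ Set.Icc 0 u) → (∀ i, b i ∈ Set.Icc 0 u) →
        (∀ i, c i ∈ Set.Icc 0 u) → (∀ i, d i ∈ Set.Icc 0 u) →
        Monotone a → Monotone b → Monotone c → Monotone d →
        IsLUB (Set.range a) A → IsLUB (Set.range b) B →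
        IsLUB (Set.range c) C → IsLUB (Set.range d) D →
        (∀ i, a i + d i - b i - c i ∈ Set.Icc 0 u) →
        Monotone (fun i => a i + d i - b i - c i) →
        (A + D - B - C ∈ Set.Icc 0 u ∧
          IsLUB (Set.range fun i => a i + d i - b i - c i) (A + D - B - C))) ∧
      (∀ (a b c d : ℕ → G) (A B C D : G),
        (∀ i, a i ∈ Set.Icc 0 u) → (∀ i, b i ∈ Set.Icc 0 u) →
        (∀ i, c i ∈ Set.Icc 0 u) → (∀ i, d i ∈ Set.Icc 0 u) →
        Antitone a → Antitone b → Antitone c → Antitone d →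
        IsGLB (Set.range a) A → IsGLB (Set.range b) B →
        IsGLB (Set.range c) C → IsGLB (Set.range d) D →
        (∀ i, a i + d i - b i - c i ∈ Set.Icc 0 u) →
        Antitone (fun i => a i + d i - b i - c i) →
        (A + D - B - C ∈ Set.Icc 0 u ∧
          IsGLB (Set.range fun i => a i + d i - b i - c i) (A + D - B - C))) ∧
      (∀ (a b c d : ℕ → G) (A B C D : G),
        (∀ i, a i ∈ Set.Icc 0 u) → (∀ i, b i ∈ Set.Icc 0 u) →
        (∀ i, c i ∈ Set.Icc 0 u) → (∀ i, d i ∈ Set.Icc 0 u) →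
        Monotone a → Monotone b → Monotone c → Monotone d →
        IsLUB (Set.range a) A → IsLUB (Set.range b) B →
        IsLUB (Set.range c) C → IsLUB (Set.range d) D →
        (∀ i, a i + d i - b i - c i ∈ Set.Icc 0 u) →
        Antitone (fun i => a i + d i - b i - c i) →
        (A + D - B - C ∈ Set.Icc 0 u ∧
          IsGLB (Set.range fun i => a i + d i - b i - c i) (A + D - B - C))) ∧
      (∀ (a b c d : ℕ → G) (A B C D : G),
        (∀ i, a i ∈ Set.Icc 0 u) → (∀ i, b i ∈ Set.Icc 0 u) →
        (∀ i, c i ∈ Set.Icc 0 u) → (∀ i, d i ∈ Set.Icc 0 u) →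
        Antitone a → Antitone b → Antitone c → Antitone d →
        IsGLB (Set.range a) A → IsGLB (Set.range b) B →
        IsGLB (Set.range c) C → IsGLB (Set.range d) D →
        (∀ i, a i + d i - b i - c i ∈ Set.Icc 0 u) →
        Monotone (fun i => a i + d i - b i - c i) →
        (A + D - B - C ∈ Set.Icc 0 u ∧
          IsLUB (Set.range fun i => a i + d i - b i - c i) (A + D - B - C)))) := by
  haveI : CovariantClass (ℤ ×ₗ G) (ℤ ×ₗ G) (· + ·) (· ≤ ·) := lex_covariant
  refine ⟨?_, ?_, ?_, ?_, ?_⟩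
  · intro a b c d A B C D hma hmb hmc hmd ma mb mc md hA hB hC hD hmem me
    have h := aux_key1 ma mb mc md hA hB hC hD me
    exact ⟨memIcc_of_isLUB hmem h, h⟩
  · intro a b c d A B C D hma hmb hmc hmd ma mb mc md hA hB hC hD hmem me
    have h := aux_key2 ma mb mc md hA hB hC hD me
    exact ⟨memIcc_of_isGLB hmem h, h⟩
  · intro a b c d A B C D hma hmb hmc hmd ma mb mc md hA hB hC hD hmem me
    have h := aux_key3 ma mb mc md hA hB hC hD me
    exact ⟨memIcc_of_isGLB hmem h, h⟩
  · intro a b c d A B C D hma hmb hmc hmd ma mb mc md hA hB hC hD hmem me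
    have h := aux_key4 ma mb mc md hA hB hC hD me
    exact ⟨memIcc_of_isLUB hmem h, h⟩
  · intro u hu
    refine ⟨?_, ?_, ?_, ?_⟩
    · intro a b c d A B C D hma hmb hmc hmd ma mb mc md hA hB hC hD hmem me
      have h := aux_key1 ma mb mc md hA hB hC hD me
      exact ⟨memIcc_of_isLUB hmem h, h⟩
    · intro a b c d A B C D hma hmb hmc hmd ma mb mc md hA hB hC hD hmem me
      have h := aux_key2 ma mb mc md hA hB hC hD me
      exact ⟨memIcc_of_isGLB hmem h, h⟩
    · intro a b c d A B C D hma hmb hmc hmd ma mb mc md hA hB hC hD hmem me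
      have h := aux_key3 ma mb mc md hA hB hC hD me
      exact ⟨memIcc_of_isGLB hmem h, h⟩
    · intro a b c d A B C D hma hmb hmc hmd ma mb mc md hA hB hC hD hmem me
      have h := aux_key4 ma mb mc md hA hB hC hD me
      exact ⟨memIcc_of_isLUB hmem h, h⟩
end

section
/- Let G be a Dedekind σ-complete abelian lattice-ordered group, M = Γ(ℤ ×ₗ G,(1,0)) the perfect MV-algebra, and F : ℝ² → M a two-dimensional spectral resolution. Then for each t₁ ∈ ℝ ∪ {−∞} and s₁ ∈ ℝ ∪ {+∞}, provided that for every s < s₁ the set {F(s,t) : t > t₁} has a greatest lower bound in M and the set {F(s₁,t) : t > t₁} has a greatest lower bound in M (for s₁ = +∞, F(+∞,t) denotes the least upper bound of {F(s,t) : s ∈ ℝ}, and for t₁ = −∞ the infima are over all t ∈ ℝ), one has: the greatest lower bound of {F(s₁,t) : t > t₁} equals the least upper bound of {⋀{F(s,t) : t > t₁} : s < s₁}. In particular the iterated value F(s₁⁻, t₁⁺) is well defined, i.e. the supremum over s < s₁ of the infima over t > t₁ equals the infimum over t > t₁ of the suprema over s < s₁. -/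
open Classical

section LexHelpers

variable {G : Type*} [AddCommGroup G] [Lattice G] [CovariantClass G G (· + ·) (· ≤ ·)]

lemma lex_cov_left : CovariantClass (ℤ ×ₗ G) (ℤ ×ₗ G) (· + ·) (· ≤ ·) :=
  ⟨fun z _ _ h => (Prod.Lex.le_iff.1 h).elim
    (fun h' => Prod.Lex.left _ _ <| add_lt_add_right h' _)
    (fun h' => Prod.Lex.le_iff.2 <| Or.inr
      ⟨congr_arg (z.1 + ·) h'.1, add_le_add_right h'.2 _⟩)⟩

lemma lex_cov_right :
    CovariantClass (ℤ ×ₗ G) (ℤ ×ₗ G) (Function.swap (· + ·)) (· ≤ ·) := by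
  haveI := lex_cov_left (G := G)
  exact ⟨fun c a b h => by
    show a + c ≤ b + c
    rw [add_comm a c, add_comm b c]
    exact add_le_add_right h c⟩

end LexHelpers

open Paper in

/-- Lemma 2.3: for a two-dimensional spectral resolution `F` on the perfect
MV-algebra `Γ(ℤ ×ₗ G,(1,0))` and thresholds `s₁ ∈ ℝ ∪ {+∞}`, `t₁ ∈ ℝ ∪ {-∞}`, the
suprema over `s < s₁` of the infima over `t > t₁` equal the infimum over `t > t₁` of
`F(s₁,·)` (where `F(+∞,t)` denotes the supremum over `s`); provided all the infima exist. -/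
theorem statement_2 {G : Type*} [AddCommGroup G] [Lattice G]
    [CovariantClass G G (· + ·) (· ≤ ·)]
    (hsc : DedekindSC G)
    (F : ℝ → ℝ → ℤ ×ₗ G) (hF : IsSR2 F)
    (s₁ : EReal) (hs₁ : s₁ ≠ ⊥) (t₁ : EReal) (ht₁ : t₁ ≠ ⊤)
    (Φ : ℝ → ℤ ×ₗ G)
    (hΦreal : ∀ s : ℝ, s₁ = (s : EReal) → ∀ t : ℝ, Φ t = F s t)
    (hΦtop : s₁ = ⊤ → ∀ t : ℝ, IsLUB {y | ∃ s : ℝ, y = F s t} (Φ t))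
    (m : ℝ → ℤ ×ₗ G)
    (hm : ∀ s : ℝ, (s : EReal) < s₁ →
      IsGLB {y | ∃ t : ℝ, t₁ < (t : EReal) ∧ y = F s t} (m s))
    (M : ℤ ×ₗ G)
    (hM : IsGLB {y | ∃ t : ℝ, t₁ < (t : EReal) ∧ y = Φ t} M) :
    IsLUB {y | ∃ s : ℝ, (s : EReal) < s₁ ∧ y = m s} M := by
  haveI := lex_cov_left (G := G)
  haveI := lex_cov_right (G := G)
  -- joint monotonicity of F from left-continuity
  have mono : ∀ ⦃a b : ℝ⦄, a ≤ b → ∀ ⦃c d : ℝ⦄, c ≤ d → F a c ≤ F b d := by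
    intro a b hab c d hcd
    refine (hF.leftCont a c).2 ?_
    rintro y ⟨s', t', hs', ht', rfl⟩
    exact (hF.leftCont b d).1 ⟨s', t', lt_of_lt_of_le hs' hab, lt_of_lt_of_le ht' hcd, rfl⟩
  -- Φ t is the LUB of {F s t : s < s₁}
  have K : ∀ t : ℝ, IsLUB {y | ∃ s : ℝ, (s : EReal) < s₁ ∧ y = F s t} (Φ t) := by
    have hcases : s₁ = ⊤ ∨ ∃ r : ℝ, s₁ = (r : EReal) := by
      induction s₁ using EReal.rec with
      | bot => exact absurd rfl hs₁
      | coe r => exact Or.inr ⟨r, rfl⟩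
      | top => exact Or.inl rfl
    intro t
    rcases hcases with h | ⟨r, h⟩
    · have hset : {y | ∃ s : ℝ, (s : EReal) < s₁ ∧ y = F s t} = {y | ∃ s : ℝ, y = F s t} := by
        ext y
        constructor
        · rintro ⟨s, _, rfl⟩; exact ⟨s, rfl⟩
        · rintro ⟨s, rfl⟩; exact ⟨s, h ▸ EReal.coe_lt_top s, rfl⟩
      rw [hset]
      exact hΦtop h t
    · rw [hΦreal r h t]
      constructor
      · rintro y ⟨s, hs, rfl⟩
        have : s < r := EReal.coe_lt_coe_iff.1 (h ▸ hs)
        exact mono this.le le_rfl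
      · intro v hv
        refine (hF.leftCont r t).2 ?_
        rintro y ⟨s', t', hs', ht', rfl⟩
        have h1 : F s' t' ≤ F s' t := mono le_rfl ht'.le
        have h2 : F s' t ∈ {y | ∃ s : ℝ, (s : EReal) < s₁ ∧ y = F s t} :=
          ⟨s', h ▸ EReal.coe_lt_coe_iff.2 hs', rfl⟩
        exact h1.trans (hv h2)
  -- a real t' with t₁ < t'
  obtain ⟨t', ht'⟩ : ∃ t' : ℝ, t₁ < (t' : EReal) := by
    induction t₁ using EReal.rec with
    | bot => exact ⟨0, EReal.bot_lt_coe 0⟩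
    | coe r => exact ⟨r + 1, EReal.coe_lt_coe_iff.2 (lt_add_one r)⟩
    | top => exact absurd rfl ht₁
  constructor
  · -- M is an upper bound of {m s : s < s₁}
    rintro y ⟨s, hs, rfl⟩
    refine hM.2 ?_
    rintro y ⟨t, ht, rfl⟩
    calc m s ≤ F s t := (hm s hs).1 ⟨t, ht, rfl⟩
      _ ≤ Φ t := (K t).1 ⟨s, hs, rfl⟩
  · -- M is below every upper bound u
    intro u hu
    have key : ∀ s : ℝ, (s : EReal) < s₁ → F s t' ≤ (u - M) + Φ t' := by
      intro s hs
      have hc : ∀ t : ℝ, t₁ < (t : EReal) → M ≤ F s t + (Φ t' - F s t') := by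
        intro t ht
        have htt : t₁ < ((min t t' : ℝ) : EReal) := by
          rcases min_choice t t' with h | h <;> rw [h]
          · exact ht
          · exact ht'
        have step : Φ (min t t') ≤ F s (min t t') + (Φ t' - F s t') := by
          refine (K (min t t')).2 ?_
          rintro y ⟨s', hs', rfl⟩
          have hs'' : ((max s s' : ℝ) : EReal) < s₁ := by
            rcases max_choice s s' with h | h <;> rw [h]
            · exact hs
            · exact hs'
          have hv := hF.vol s (max s s') (min t t') t' (le_max_left _ _) (min_le_right _ _)
          have e : F (max s s') t' - F s t' - F (max s s') (min t t') + F s (min t t')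
              = (F s (min t t') + (F (max s s') t' - F s t')) - F (max s s') (min t t') := by
            abel
          rw [e] at hv
          have h1 : F (max s s') (min t t')
              ≤ F s (min t t') + (F (max s s') t' - F s t') := sub_nonneg.mp hv
          have h2 : F (max s s') t' - F s t' ≤ Φ t' - F s t' :=
            sub_le_sub_right ((K t').1 ⟨max s s', hs'', rfl⟩) _
          calc F s' (min t t') ≤ F (max s s') (min t t') := mono (le_max_right s s') le_rfl
            _ ≤ F s (min t t') + (F (max s s') t' - F s t') := h1
            _ ≤ F s (min t t') + (Φ t' - F s t') := add_le_add_right h2 _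
        calc M ≤ Φ (min t t') := hM.1 ⟨min t t', htt, rfl⟩
          _ ≤ F s (min t t') + (Φ t' - F s t') := step
          _ ≤ F s t + (Φ t' - F s t') := add_le_add_left (mono le_rfl (min_le_left t t')) _
      have hlb : M - (Φ t' - F s t') ≤ m s := by
        refine (hm s hs).2 ?_
        rintro y ⟨t, ht, rfl⟩
        exact sub_le_iff_le_add.mpr (hc t ht)
      have h3 : M - (Φ t' - F s t') ≤ u := hlb.trans (hu ⟨s, hs, rfl⟩)
      have e : M - (Φ t' - F s t') = F s t' + (M - Φ t') := by abel
      rw [e] at h3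
      calc F s t' ≤ u - (M - Φ t') := le_sub_iff_add_le.mpr h3
        _ = (u - M) + Φ t' := by abel
    have h4 : Φ t' ≤ (u - M) + Φ t' := by
      refine (K t').2 ?_
      rintro y ⟨s, hs, rfl⟩
      exact key s hs
    have h5 : (0 : ℤ ×ₗ G) + Φ t' ≤ (u - M) + Φ t' := by simpa using h4
    exact sub_nonneg.mp (le_of_add_le_add_right h5)
end

section
/- Let G be a directed partially ordered abelian group with the Riesz interpolation property which is Dedekind monotone σ-complete, let k ≥ 1, and let E = {a ∈ ℤ ×ₗ G : (0,0) ≤ a ≤ (k,0)}. For each δ ∈ {0,1}ⁿ let (a_δ^i)_{i∈ℕ} be a sequence in E, and let π(δ) denote the number of zero coordinates of δ. Suppose all the sequences (a_δ^i)_i are nondecreasing (respectively, all nonincreasing) with least upper bounds (respectively, greatest lower bounds) a_δ, and suppose the sequence S_i = Σ_{δ∈{0,1}ⁿ} (−1)^{π(δ)} a_δ^i takes values in E and is nondecreasing or nonincreasing. Then: if (S_i) is nondecreasing, its least upper bound exists and equals Σ_δ (−1)^{π(δ)} a_δ; if (S_i) is nonincreasing, its greatest lower bound exists and equals Σ_δ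 (−1)^{π(δ)} a_δ. This holds in each of the four combinations: the (a_δ^i)_i all nondecreasing or all nonincreasing, and (S_i) nondecreasing or nonincreasing. -/
open Classical

namespace Paper

/-- The alternating sum `Σ_{δ ∈ {0,1}ⁿ} (-1)^{π(δ)} a_δ`, where `π(δ)` is the number of
zero (here: `false`) coordinates of `δ`. -/
def signSum {M : Type*} [AddCommGroup M] {n : ℕ} (a : (Fin n → Bool) → M) : M :=
  ∑ δ : Fin n → Bool,
    (-1 : ℤ) ^ (Finset.univ.filter fun j => δ j = false).card • a δ

end Paper


namespace Statement5Aux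

section
variable {M : Type*} [AddCommGroup M] [PartialOrder M] [CovariantClass M M (· + ·) (· ≤ ·)]

lemma myNegLe {a b : M} (h : a ≤ b) : -b ≤ -a := by
  have := add_le_add_left h (-b + -a)
  simpa [add_assoc, add_comm, add_left_comm] using this

lemma mySum_le {ι : Type*} {s : Finset ι} {f g : ι → M} (h : ∀ δ ∈ s, f δ ≤ g δ) :
    ∑ δ ∈ s, f δ ≤ ∑ δ ∈ s, g δ := by
  classical
  induction s using Finset.induction with
  | empty => simp
  | insert x t hx ih =>
    rw [Finset.sum_insert hx, Finset.sum_insert hx]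
    exact add_le_add (h x (Finset.mem_insert_self x t))
      (ih fun δ hδ => h δ (Finset.mem_insert_of_mem hδ))

lemma lub_add {f g : ℕ → M} {p q : M} (hf : Monotone f) (hg : Monotone g)
    (hp : IsLUB (Set.range f) p) (hq : IsLUB (Set.range g) q) :
    IsLUB (Set.range fun i => f i + g i) (p + q) := by
  constructor
  · rintro _ ⟨i, rfl⟩
    exact add_le_add (hp.1 ⟨i, rfl⟩) (hq.1 ⟨i, rfl⟩)
  · intro u hu
    have h1 : ∀ j, f j ≤ u - q := by
      intro j
      rw [le_sub_iff_add_le]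
      have h2 : ∀ i, g i ≤ u - f j := by
        intro i
        rcases le_total i j with hij | hij
        · rw [le_sub_iff_add_le, add_comm]
          calc f j + g i ≤ f j + g j := add_le_add_right (hg hij) _
            _ ≤ u := hu ⟨j, rfl⟩
        · rw [le_sub_iff_add_le, add_comm]
          calc f j + g i ≤ f i + g i := add_le_add (hf hij) le_rfl
            _ ≤ u := hu ⟨i, rfl⟩
      have h3 : q ≤ u - f j := hq.2 (by rintro _ ⟨i, rfl⟩; exact h2 i)
      rw [le_sub_iff_add_le, add_comm] at h3
      exact h3
    have h4 : p ≤ u - q := hp.2 (by rintro _ ⟨j, rfl⟩; exact h1 j)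
    rwa [le_sub_iff_add_le] at h4

lemma lub_sum {ι : Type*} (s : Finset ι) (f : ι → ℕ → M) (A : ι → M)
    (hf : ∀ δ, Monotone (f δ)) (hA : ∀ δ, IsLUB (Set.range (f δ)) (A δ)) :
    IsLUB (Set.range fun i => ∑ δ ∈ s, f δ i) (∑ δ ∈ s, A δ) := by
  classical
  induction s using Finset.induction with
  | empty => simpa using isLUB_singleton
  | insert x t hx ih =>
    have hmono : Monotone (fun i => ∑ δ ∈ t, f δ i) :=
      fun i j hij => mySum_le fun δ _ => hf δ hij
    have h := lub_add (hf x) hmono (hA x) ih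
    simpa [Finset.sum_insert hx] using h

lemma key_lub {P Q : ℕ → M} {p q : M} (hP : Monotone P) (hQ : Monotone Q)
    (hp : IsLUB (Set.range P) p) (hq : IsLUB (Set.range Q) q)
    (hS : Monotone fun i => P i - Q i) :
    IsLUB (Set.range fun i => P i - Q i) (p - q) := by
  constructor
  · rintro _ ⟨i, rfl⟩
    have h2 : ∀ j, Q j ≤ p - (P i - Q i) := by
      intro j
      rcases le_total j i with hij | hij
      · rw [le_sub_iff_add_le, add_comm]
        calc P i - Q i + Q j ≤ P i - Q i + Q i := add_le_add_right (hQ hij) _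
          _ = P i := by abel
          _ ≤ p := hp.1 ⟨i, rfl⟩
      · rw [le_sub_iff_add_le, add_comm]
        calc P i - Q i + Q j ≤ (P j - Q j) + Q j := add_le_add (hS hij) le_rfl
          _ = P j := by abel
          _ ≤ p := hp.1 ⟨j, rfl⟩
    have h3 : q ≤ p - (P i - Q i) := hq.2 (by rintro _ ⟨j, rfl⟩; exact h2 j)
    rw [le_sub_iff_add_le, add_comm, ← le_sub_iff_add_le] at h3
    exact h3
  · intro u hu
    have h1 : ∀ i, P i ≤ u + q := by
      intro i
      have h := hu ⟨i, rfl⟩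
      calc P i = (P i - Q i) + Q i := by abel
        _ ≤ u + q := add_le_add h (hq.1 ⟨i, rfl⟩)
    have h4 : p ≤ u + q := hp.2 (by rintro _ ⟨i, rfl⟩; exact h1 i)
    rwa [sub_le_iff_le_add]

lemma key_glb {P Q : ℕ → M} {p q : M} (hP : Monotone P) (_hQ : Monotone Q)
    (hp : IsLUB (Set.range P) p) (hq : IsLUB (Set.range Q) q)
    (hS : Antitone fun i => P i - Q i) :
    IsGLB (Set.range fun i => P i - Q i) (p - q) := by
  constructor
  · rintro _ ⟨i, rfl⟩
    have h1 : ∀ j, P j ≤ (P i - Q i) + q := by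
      intro j
      rcases le_total j i with hij | hij
      · calc P j ≤ P i := hP hij
          _ = (P i - Q i) + Q i := by abel
          _ ≤ (P i - Q i) + q := add_le_add_right (hq.1 ⟨i, rfl⟩) _
      · calc P j = (P j - Q j) + Q j := by abel
          _ ≤ (P i - Q i) + q := add_le_add (hS hij) (hq.1 ⟨j, rfl⟩)
    have h4 : p ≤ (P i - Q i) + q := hp.2 (by rintro _ ⟨j, rfl⟩; exact h1 j)
    rwa [sub_le_iff_le_add]
  · intro u hu
    have h1 : ∀ i, Q i ≤ p - u := by
      intro i
      have h := hu ⟨i, rfl⟩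
      rw [le_sub_iff_add_le] at h
      rw [le_sub_iff_add_le, add_comm]
      exact h.trans (hp.1 ⟨i, rfl⟩)
    have h2 : q ≤ p - u := hq.2 (by rintro _ ⟨i, rfl⟩; exact h1 i)
    rw [le_sub_iff_add_le, add_comm, ← le_sub_iff_add_le] at h2
    exact h2

lemma glb_neg {f : ℕ → M} {a : M} (h : IsGLB (Set.range f) a) :
    IsLUB (Set.range fun i => -f i) (-a) := by
  constructor
  · rintro _ ⟨i, rfl⟩; exact myNegLe (h.1 ⟨i, rfl⟩)
  · intro u hu
    have h1 : ∀ i, -u ≤ f i := fun i => by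
      have h2 := hu ⟨i, rfl⟩; simpa using myNegLe h2
    have h3 : -u ≤ a := h.2 (by rintro _ ⟨i, rfl⟩; exact h1 i)
    simpa using myNegLe h3

end

open Finset in
lemma signSum_split {M : Type*} [AddCommGroup M] {n : ℕ} (a : (Fin n → Bool) → M) :
    Paper.signSum a =
      (∑ δ ∈ Finset.univ.filter
          (fun δ : Fin n → Bool => Even (Finset.univ.filter fun j => δ j = false).card), a δ)
      - ∑ δ ∈ Finset.univ.filter
          (fun δ : Fin n → Bool => ¬ Even (Finset.univ.filter fun j => δ j = false).card), a δ := by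
  classical
  unfold Paper.signSum
  rw [← Finset.sum_filter_add_sum_filter_not Finset.univ
    (fun δ : Fin n → Bool => Even (Finset.univ.filter fun j => δ j = false).card)]
  rw [sub_eq_add_neg, ← Finset.sum_neg_distrib]
  congr 1
  · refine Finset.sum_congr rfl fun δ hδ => ?_
    rw [Finset.mem_filter] at hδ
    rw [hδ.2.neg_one_pow, one_zsmul]
  · refine Finset.sum_congr rfl fun δ hδ => ?_
    rw [Finset.mem_filter] at hδ
    rw [(Nat.not_even_iff_odd.mp hδ.2).neg_one_pow, neg_one_zsmul]

end Statement5Aux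

instance lexCovariant {G : Type*} [AddCommGroup G] [PartialOrder G]
    [CovariantClass G G (· + ·) (· ≤ ·)] :
    CovariantClass (ℤ ×ₗ G) (ℤ ×ₗ G) (· + ·) (· ≤ ·) := by
  constructor
  intro c a b h
  show c + a ≤ c + b
  have h' : toLex (ofLex a) ≤ toLex (ofLex b) := h
  rw [Prod.Lex.le_iff] at h'
  have h2 : toLex (ofLex c + ofLex a) ≤ toLex (ofLex c + ofLex b) := by
    rw [Prod.Lex.le_iff]
    rcases h' with h | ⟨h1, h2⟩
    · left; exact add_lt_add_right h _
    · right; exact ⟨by simp only [ofLex_toLex] at h1; simp [h1], add_le_add_right h2 _⟩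
  exact h2

open Paper in
/-- Lemma 3.1: limits of monotone sequences of alternating sums
`S_i = Σ_δ (-1)^{π(δ)} a_δ^i` with values in `E = Γ(ℤ ×ₗ G,(k,0))`, in all four
monotonicity combinations. -/
theorem statement_5 {G : Type*} [AddCommGroup G] [PartialOrder G]
    [CovariantClass G G (· + ·) (· ≤ ·)]
    (hdir : DirectedPO G) (hip : RieszInterp G) (hsc : MonSigmaComplete G)
    (k : ℤ) (hk : 1 ≤ k) {n : ℕ}
    (a : (Fin n → Bool) → ℕ → ℤ ×ₗ G) (A : (Fin n → Bool) → ℤ ×ₗ G)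
    (hmem : ∀ δ i, a δ i ∈ Ek G k)
    (hS : ∀ i, signSum (fun δ => a δ i) ∈ Ek G k) :
    -- all `(a_δ)` nondecreasing, `S` nondecreasing
    ((∀ δ, Monotone (a δ)) → (∀ δ, IsLUB (Set.range (a δ)) (A δ)) →
      Monotone (fun i => signSum (fun δ => a δ i)) →
      IsLUB (Set.range fun i => signSum (fun δ => a δ i)) (signSum A)) ∧
    -- all `(a_δ)` nondecreasing, `S` nonincreasing
    ((∀ δ, Monotone (a δ)) → (∀ δ, IsLUB (Set.range (a δ)) (A δ)) →
      Antitone (fun i => signSum (fun δ => a δ i)) →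
      IsGLB (Set.range fun i => signSum (fun δ => a δ i)) (signSum A)) ∧
    -- all `(a_δ)` nonincreasing, `S` nondecreasing
    ((∀ δ, Antitone (a δ)) → (∀ δ, IsGLB (Set.range (a δ)) (A δ)) →
      Monotone (fun i => signSum (fun δ => a δ i)) →
      IsLUB (Set.range fun i => signSum (fun δ => a δ i)) (signSum A)) ∧
    -- all `(a_δ)` nonincreasing, `S` nonincreasing
    ((∀ δ, Antitone (a δ)) → (∀ δ, IsGLB (Set.range (a δ)) (A δ)) →
      Antitone (fun i => signSum (fun δ => a δ i)) →
      IsGLB (Set.range fun i => signSum (fun δ => a δ i)) (signSum A)) := by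
  classical
  clear hdir hip hsc hk hmem hS
  set pos : Finset (Fin n → Bool) := Finset.univ.filter
    (fun δ : Fin n → Bool => Even (Finset.univ.filter fun j => δ j = false).card) with hpos
  set neg : Finset (Fin n → Bool) := Finset.univ.filter
    (fun δ : Fin n → Bool => ¬ Even (Finset.univ.filter fun j => δ j = false).card) with hneg
  have hsplit : ∀ b : (Fin n → Bool) → ℤ ×ₗ G,
      signSum b = (∑ δ ∈ pos, b δ) - ∑ δ ∈ neg, b δ := fun b =>
    Statement5Aux.signSum_split b
  have hfun : (fun i => signSum fun δ => a δ i)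
      = fun i => (∑ δ ∈ pos, a δ i) - ∑ δ ∈ neg, a δ i := funext fun i => hsplit _
  rw [hfun, hsplit A]
  refine ⟨?_, ?_, ?_, ?_⟩
  · intro hmono hlub hSmono
    exact Statement5Aux.key_lub
      (fun i j hij => Statement5Aux.mySum_le fun δ _ => hmono δ hij)
      (fun i j hij => Statement5Aux.mySum_le fun δ _ => hmono δ hij)
      (Statement5Aux.lub_sum pos _ _ hmono hlub)
      (Statement5Aux.lub_sum neg _ _ hmono hlub) hSmono
  · intro hmono hlub hSanti
    exact Statement5Aux.key_glb
      (fun i j hij => Statement5Aux.mySum_le fun δ _ => hmono δ hij)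
      (fun i j hij => Statement5Aux.mySum_le fun δ _ => hmono δ hij)
      (Statement5Aux.lub_sum pos _ _ hmono hlub)
      (Statement5Aux.lub_sum neg _ _ hmono hlub) hSanti
  · intro hanti hglb hSmono
    have hbmono : ∀ δ, Monotone fun i => -(a δ i) :=
      fun δ i j hij => Statement5Aux.myNegLe (hanti δ hij)
    have hblub : ∀ δ, IsLUB (Set.range fun i => -(a δ i)) (-(A δ)) :=
      fun δ => Statement5Aux.glb_neg (hglb δ)
    have hrw : (fun i => (∑ δ ∈ neg, -(a δ i)) - ∑ δ ∈ pos, -(a δ i))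
        = fun i => (∑ δ ∈ pos, a δ i) - ∑ δ ∈ neg, a δ i := by
      funext i
      rw [Finset.sum_neg_distrib, Finset.sum_neg_distrib]; abel
    have hrwA : (∑ δ ∈ neg, -(A δ)) - ∑ δ ∈ pos, -(A δ)
        = (∑ δ ∈ pos, A δ) - ∑ δ ∈ neg, A δ := by
      rw [Finset.sum_neg_distrib, Finset.sum_neg_distrib]; abel
    have h := Statement5Aux.key_lub
      (fun i j hij => Statement5Aux.mySum_le fun δ _ => hbmono δ hij)
      (fun i j hij => Statement5Aux.mySum_le fun δ _ => hbmono δ hij)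
      (Statement5Aux.lub_sum neg _ _ hbmono hblub)
      (Statement5Aux.lub_sum pos _ _ hbmono hblub)
      (by rw [hrw]; exact hSmono)
    rw [hrw, hrwA] at h
    exact h
  · intro hanti hglb hSanti
    have hbmono : ∀ δ, Monotone fun i => -(a δ i) :=
      fun δ i j hij => Statement5Aux.myNegLe (hanti δ hij)
    have hblub : ∀ δ, IsLUB (Set.range fun i => -(a δ i)) (-(A δ)) :=
      fun δ => Statement5Aux.glb_neg (hglb δ)
    have hrw : (fun i => (∑ δ ∈ neg, -(a δ i)) - ∑ δ ∈ pos, -(a δ i))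
        = fun i => (∑ δ ∈ pos, a δ i) - ∑ δ ∈ neg, a δ i := by
      funext i
      rw [Finset.sum_neg_distrib, Finset.sum_neg_distrib]; abel
    have hrwA : (∑ δ ∈ neg, -(A δ)) - ∑ δ ∈ pos, -(A δ)
        = (∑ δ ∈ pos, A δ) - ∑ δ ∈ neg, A δ := by
      rw [Finset.sum_neg_distrib, Finset.sum_neg_distrib]; abel
    have h := Statement5Aux.key_glb
      (fun i j hij => Statement5Aux.mySum_le fun δ _ => hbmono δ hij)
      (fun i j hij => Statement5Aux.mySum_le fun δ _ => hbmono δ hij)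
      (Statement5Aux.lub_sum neg _ _ hbmono hblub)
      (Statement5Aux.lub_sum pos _ _ hbmono hblub)
      (by rw [hrw]; exact hSanti)
    rw [hrw, hrwA] at h
    exact h
end

section
/- Let F : ℝⁿ → E be an n-dimensional spectral resolution on the perfect effect algebra E = Γ_ea(ℤ ×ₗ G,(1,0)). Fix 1 ≤ k < n, s̄ ∈ ℝᵏ and t̄ ∈ ℝ^{n−k}, and suppose that for every q̄ ∈ ℝᵏ with q̄ ≪ s̄ the set {F(q̄,r̄) : r̄ ≫ t̄} has a greatest lower bound in E, and that {F(s̄,r̄) : r̄ ≫ t̄} has a greatest lower bound in E. Then ⋀{F(s̄,r̄) : r̄ ≫ t̄} is the least upper bound of the family {⋀{F(q̄,r̄) : r̄ ≫ t̄} : q̄ ≪ s̄}. Consequently, applying to F any sequence of operators Ξ₁,…,Ξₙ, where each Ξᵢ is either the supremum over the i-th argument tending to a prescribed value from below or the infimum over the i-th argument tending to a prescribed value from above, yields the same element of E regardless of the order in which the operators are applied (whenever the infima involved exist). -/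
open Classical

/-! ### Auxiliary development for statement 6 -/

namespace Aux6

set_option linter.unusedSectionVars false

open Paper Finset Function

section Lex

variable {G : Type*} [AddCommGroup G] [PartialOrder G]
  [CovariantClass G G (· + ·) (· ≤ ·)]

instance gCovSwap : CovariantClass G G (Function.swap (· + ·)) (· ≤ ·) :=
  ⟨fun c a b h => by
    simpa [Function.swap, add_comm] using add_le_add_left h c⟩

lemma lex_le_iff (a b : ℤ ×ₗ G) : a ≤ b ↔
    (ofLex a).1 < (ofLex b).1 ∨ (ofLex a).1 = (ofLex b).1 ∧ (ofLex a).2 ≤ (ofLex b).2 :=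
  Prod.Lex.le_iff

lemma lex_fst_mono {a b : ℤ ×ₗ G} (h : a ≤ b) : (ofLex a).1 ≤ (ofLex b).1 := by
  rcases (lex_le_iff a b).1 h with h1 | ⟨h1, _⟩
  · exact h1.le
  · exact h1.le

lemma lex_le_of_fst_lt {a b : ℤ ×ₗ G} (h : (ofLex a).1 < (ofLex b).1) : a ≤ b :=
  (lex_le_iff a b).2 (Or.inl h)

lemma lex_le_of_eq_le {a b : ℤ ×ₗ G} (h1 : (ofLex a).1 = (ofLex b).1)
    (h2 : (ofLex a).2 ≤ (ofLex b).2) : a ≤ b :=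
  (lex_le_iff a b).2 (Or.inr ⟨h1, h2⟩)

lemma lex_snd_le {a b : ℤ ×ₗ G} (h : a ≤ b) (h1 : (ofLex a).1 = (ofLex b).1) :
    (ofLex a).2 ≤ (ofLex b).2 := by
  rcases (lex_le_iff a b).1 h with h2 | ⟨_, h2⟩
  · omega
  · exact h2

@[simp] lemma ofLex_zero' : (ofLex (0 : ℤ ×ₗ G)) = (0, 0) := rfl

instance lexCov : CovariantClass (ℤ ×ₗ G) (ℤ ×ₗ G) (· + ·) (· ≤ ·) := by
  constructor
  intro c a b h
  rcases (lex_le_iff a b).1 h with h1 | ⟨h1, h2⟩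
  · exact (lex_le_iff (c + a) (c + b)).2 (Or.inl
      (show (ofLex c).1 + (ofLex a).1 < (ofLex c).1 + (ofLex b).1 from add_lt_add_right h1 _))
  · exact (lex_le_iff (c + a) (c + b)).2 (Or.inr
      ⟨show (ofLex c).1 + (ofLex a).1 = (ofLex c).1 + (ofLex b).1 by rw [h1],
       show (ofLex c).2 + (ofLex a).2 ≤ (ofLex c).2 + (ofLex b).2 from add_le_add_right h2 _⟩)

instance lexCovSwap : CovariantClass (ℤ ×ₗ G) (ℤ ×ₗ G) (Function.swap (· + ·)) (· ≤ ·) :=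
  ⟨fun c a b h => by
    simpa [Function.swap, add_comm] using lexCov.elim c h⟩

/-- first component, as an additive hom. -/
def fstHom : (ℤ ×ₗ G) →+ ℤ where
  toFun x := (ofLex x).1
  map_zero' := rfl
  map_add' _ _ := rfl

/-- second component, as an additive hom. -/
def sndHom : (ℤ ×ₗ G) →+ G where
  toFun x := (ofLex x).2
  map_zero' := rfl
  map_add' _ _ := rfl

end Lex

section Sum

/-- Sum monotonicity for covariant partially ordered commutative groups. -/
lemma sum_le_sum_cov {H : Type*} [AddCommGroup H] [PartialOrder H]
    [CovariantClass H H (· + ·) (· ≤ ·)] [CovariantClass H H (Function.swap (· + ·)) (· ≤ ·)]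
    {σ : Type*} {T : Finset σ} {f g : σ → H} (h : ∀ i ∈ T, f i ≤ g i) :
    ∑ i ∈ T, f i ≤ ∑ i ∈ T, g i := by
  induction T using Finset.cons_induction with
  | empty => simp
  | cons a T ha ih =>
    rw [Finset.sum_cons, Finset.sum_cons]
    exact add_le_add (h a (Finset.mem_cons_self a T)) (ih fun i hi => h i (Finset.mem_cons_of_mem hi))

variable {G : Type*} [AddCommGroup G] [PartialOrder G]
  [CovariantClass G G (· + ·) (· ≤ ·)]

/-- In a monotone σ-complete po-group, if finitely many antitone sequences each have the
property that all their lower bounds are `≤ 0`, then any lower bound of the sequence of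
sums is `≤ 0`. -/
lemma sumGLB_G (hsc : MonSigmaComplete G) {σ : Type*} [DecidableEq σ] (T : Finset σ) :
    ∀ ξ : σ → ℕ → G, (∀ j ∈ T, Antitone (ξ j)) →
      (∀ j ∈ T, ∀ ε : G, (∀ n, ε ≤ ξ j n) → ε ≤ 0) →
      ∀ ζ : G, (∀ n, ζ ≤ ∑ j ∈ T, ξ j n) → ζ ≤ 0 := by
  induction T using Finset.induction_on with
  | empty => intro ξ _ _ ζ h; simpa using h 0
  | @insert j T hj ih =>
    intro ξ hA hL ζ h
    have hsum : ∀ n, ζ ≤ ξ j n + ∑ i ∈ T, ξ i n := by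
      intro n; simpa [Finset.sum_insert hj] using h n
    have hSA : Antitone (fun n => ∑ i ∈ T, ξ i n) := by
      intro n m hnm
      dsimp only
      exact sum_le_sum_cov fun i hi => hA i (Finset.mem_insert_of_mem hi) hnm
    have hξA : Antitone (ξ j) := hA j (Finset.mem_insert_self j T)
    have hmono : Monotone (fun n => ζ - ξ j n) := fun n m hnm =>
      sub_le_sub_left (hξA hnm) ζ
    have hle : ∀ n m, n ≤ m → ζ - ξ j n ≤ ∑ i ∈ T, ξ i m ∨ True := fun _ _ _ => Or.inr trivial
    have hkey : ∀ m n, ζ - ξ j n ≤ ∑ i ∈ T, ξ i m := by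
      intro m n
      rcases le_total n m with hnm | hmn
      · calc ζ - ξ j n ≤ ζ - ξ j m := sub_le_sub_left (hξA hnm) ζ
          _ ≤ ∑ i ∈ T, ξ i m := sub_le_iff_le_add'.2 (hsum m)
      · calc ζ - ξ j n ≤ ∑ i ∈ T, ξ i n := sub_le_iff_le_add'.2 (hsum n)
          _ ≤ ∑ i ∈ T, ξ i m := hSA hmn
    have hbdd : BddAbove (Set.range fun n => ζ - ξ j n) := ⟨∑ i ∈ T, ξ i 0, by
      rintro x ⟨n, rfl⟩; exact hkey 0 n⟩
    obtain ⟨w, hw⟩ := hsc.1 _ hmono hbdd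
    have hwS : ∀ m, w ≤ ∑ i ∈ T, ξ i m := by
      intro m
      exact hw.2 (by rintro x ⟨n, rfl⟩; exact hkey m n)
    have hw0 : w ≤ 0 :=
      ih ξ (fun i hi => hA i (Finset.mem_insert_of_mem hi))
        (fun i hi => hL i (Finset.mem_insert_of_mem hi)) w hwS
    have hζw : ζ - w ≤ 0 := by
      refine hL j (Finset.mem_insert_self j T) (ζ - w) (fun n => ?_)
      have hx : ζ - ξ j n ≤ w := hw.1 ⟨n, rfl⟩
      exact sub_le_comm.mp hx
    exact (sub_nonpos.1 hζw).trans hw0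

/-- The first components of an antitone nonnegative sequence in `ℤ ×ₗ G` all of whose lower
bounds are `≤ 0` are eventually `0`. -/
lemma exists_tail_fst_zero (x : ℕ → ℤ ×ₗ G) (hA : Antitone x) (h0 : ∀ n, 0 ≤ x n)
    (hL : ∀ ε : ℤ ×ₗ G, (∀ n, ε ≤ x n) → ε ≤ 0) :
    ∃ N, ∀ n, N ≤ n → (ofLex (x n)).1 = 0 := by
  have hd0 : ∀ n, 0 ≤ (ofLex (x n)).1 := fun n => by
    simpa using lex_fst_mono (h0 n)
  obtain ⟨c, ⟨N, hcN⟩, hcmin⟩ :=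
    Int.exists_least_of_bdd (P := fun z => ∃ n, (ofLex (x n)).1 = z)
      ⟨0, by rintro z ⟨n, rfl⟩; exact hd0 n⟩ ⟨(ofLex (x 0)).1, 0, rfl⟩
  have hcle : ∀ n, c ≤ (ofLex (x n)).1 := fun n => hcmin _ ⟨n, rfl⟩
  have hc0 : 0 ≤ c := by have := hd0 N; omega
  -- show c = 0
  have hceq : c = 0 := by
    by_contra hne
    have hc1 : 1 ≤ c := by omega
    have hpos : ∀ n, 0 < (ofLex (x n)).1 := fun n => lt_of_lt_of_le hc1 (hcle n)
    have hγ : ∀ γ : G, γ ≤ 0 := by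
      intro γ
      have h1 : toLex ((0 : ℤ), γ) ≤ 0 :=
        hL _ (fun n => lex_le_of_fst_lt (by simpa using hpos n))
      have := lex_snd_le h1 (by simp)
      simpa using this
    have hγ0 : ∀ γ : G, γ = 0 := fun γ => le_antisymm (hγ γ) (by simpa using hγ (-γ))
    have h2 : toLex (c, (0 : G)) ≤ 0 := by
      refine hL _ (fun n => ?_)
      rcases lt_or_eq_of_le (hcle n) with h | h
      · exact lex_le_of_fst_lt (by simpa using h)
      · exact lex_le_of_eq_le (by simpa using h) (by simpa using (hγ0 (ofLex (x n)).2).ge)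
    have := lex_fst_mono h2
    simp at this; omega
  refine ⟨N, fun n hn => ?_⟩
  have h1 : (ofLex (x n)).1 ≤ (ofLex (x N)).1 := lex_fst_mono (hA hn)
  have := hcle n
  omega

/-- The lexicographic version of `sumGLB_G`. -/
lemma sumGLB_lex (hsc : MonSigmaComplete G) {σ : Type*} [DecidableEq σ] (T : Finset σ)
    (x : σ → ℕ → ℤ ×ₗ G)
    (hA : ∀ j ∈ T, Antitone (x j)) (h0 : ∀ j ∈ T, ∀ n, 0 ≤ x j n)
    (hL : ∀ j ∈ T, ∀ ε : ℤ ×ₗ G, (∀ n, ε ≤ x j n) → ε ≤ 0)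
    (z : ℤ ×ₗ G) (hz : ∀ n, z ≤ ∑ j ∈ T, x j n) : z ≤ 0 := by
  have hN : ∀ j : {j // j ∈ T}, ∃ N, ∀ n, N ≤ n → (ofLex (x j.1 n)).1 = 0 := fun j =>
    exists_tail_fst_zero (x j.1) (hA j.1 j.2) (h0 j.1 j.2) (hL j.1 j.2)
  choose N hNs using hN
  set NT : ℕ := T.attach.sup N with hNT
  have hfst : ∀ j ∈ T, ∀ n : ℕ, (ofLex (x j (n + NT))).1 = 0 := by
    intro j hj n
    refine hNs ⟨j, hj⟩ (n + NT) ?_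
    calc N ⟨j, hj⟩ ≤ NT := Finset.le_sup (Finset.mem_attach _ _)
      _ ≤ n + NT := Nat.le_add_left _ _
  have hsumfst : ∀ n : ℕ, (ofLex (∑ j ∈ T, x j (n + NT))).1 = 0 := by
    intro n
    have : (ofLex (∑ j ∈ T, x j (n + NT))).1 = ∑ j ∈ T, (ofLex (x j (n + NT))).1 :=
      map_sum fstHom _ T
    rw [this]
    exact Finset.sum_eq_zero (fun j hj => hfst j hj n)
  have hz1 : (ofLex z).1 ≤ 0 := by
    have := lex_fst_mono (hz (0 + NT))
    rwa [hsumfst 0] at this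
  rcases lt_or_eq_of_le hz1 with hlt | heq
  · exact lex_le_of_fst_lt (by simpa using hlt)
  · -- second components
    have hsnd : ∀ n : ℕ, (ofLex z).2 ≤ ∑ j ∈ T, (ofLex (x j (n + NT))).2 := by
      intro n
      have h1 : (ofLex (∑ j ∈ T, x j (n + NT))).2 = ∑ j ∈ T, (ofLex (x j (n + NT))).2 :=
        map_sum sndHom _ T
      have h2 := lex_snd_le (hz (n + NT)) (by rw [hsumfst n, heq])
      rwa [h1] at h2
    have hsnd0 : (ofLex z).2 ≤ 0 := by
      refine sumGLB_G hsc T (fun j n => (ofLex (x j (n + NT))).2) ?_ ?_ _ hsnd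
      · intro j hj n m hnm
        exact lex_snd_le (hA j hj (by omega : n + NT ≤ m + NT))
          (by rw [hfst j hj, hfst j hj])
      · intro j hj ε hε
        have h1 : toLex ((0 : ℤ), ε) ≤ 0 := by
          refine hL j hj _ (fun n => ?_)
          have h2 : toLex ((0 : ℤ), ε) ≤ x j (n + NT) :=
            lex_le_of_eq_le (by simpa using (hfst j hj n).symm) (by simpa using hε n)
          exact h2.trans (hA j hj (Nat.le_add_right n NT))
        simpa using lex_snd_le h1 (by simp)
    exact lex_le_of_eq_le (by simpa using heq) (by simpa using hsnd0)

end Sum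

section SR

variable {G : Type*} [AddCommGroup G] [PartialOrder G]
  [CovariantClass G G (· + ·) (· ≤ ·)]
variable {ι : Type*} [Fintype ι] [DecidableEq ι]
variable {F : (ι → ℝ) → ℤ ×ₗ G}

lemma F_nonneg (hF : IsSR1 F) (t : ι → ℝ) : 0 ≤ F t := (hF.mem t).1

/-- Monotonicity of a spectral resolution, from left-continuity. -/
lemma F_mono (hF : IsSR1 F) {a b : ι → ℝ} (hab : ∀ i, a i ≤ b i) : F a ≤ F b := by
  refine (hF.leftCont a).2 ?_
  rintro y ⟨u, hu, rfl⟩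
  exact (hF.leftCont b).1 ⟨u, fun i => lt_of_lt_of_le (hu i) (hab i), rfl⟩

/-- Along a coordinate tending to `-∞`, the values of `F` form an antitone sequence all of
whose lower bounds are `≤ 0`. -/
lemma F_seq_antitone (hF : IsSR1 F) (l : ι) (t : ι → ℝ) {c : ℕ → ℝ} (hc : Antitone c) :
    Antitone (fun n => F (Function.update t l (c n))) := by
  intro n m hnm
  refine F_mono hF (fun i => ?_)
  by_cases h : i = l
  · rw [h]; simp only [Function.update_self]; exact hc hnm
  · simp [Function.update_of_ne h]

lemma F_seq_lb (hF : IsSR1 F) (l : ι) (t : ι → ℝ) {c : ℕ → ℝ}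
    (hc' : ∀ B : ℝ, ∃ n, c n ≤ B) :
    ∀ ε : ℤ ×ₗ G, (∀ n, ε ≤ F (Function.update t l (c n))) → ε ≤ 0 := by
  intro ε hε
  refine (hF.coordZero l t).2 ?_
  rintro y ⟨r, rfl⟩
  obtain ⟨n, hn⟩ := hc' r
  refine (hε n).trans (F_mono hF (fun i => ?_))
  by_cases h : i = l
  · rw [h]; simp only [Function.update_self]; exact hn
  · simp [Function.update_of_ne h]

/-- The iterated difference over the coordinates of `J`, with base point `b` off the moved
corners. -/
def Dif (F : (ι → ℝ) → ℤ ×ₗ G) (J : Finset ι) (a b : ι → ℝ) : ℤ ×ₗ G :=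
  ∑ S ∈ J.powerset, (-1 : ℤ) ^ (J.card - S.card) •
    F (fun i => if i ∈ J \ S then a i else b i)

lemma Dif_empty (a b : ι → ℝ) : Dif F ∅ a b = F b := by
  simp [Dif]

lemma Dif_univ (a b : ι → ℝ) : Dif F Finset.univ a b = volSum F a b := by
  unfold Dif volSum
  rw [Finset.powerset_univ]
  rw [← Finset.sum_coe_sort (Finset.univ) (fun S => (-1 : ℤ) ^ (Fintype.card ι - Finset.card S) •
    F fun i => if i ∈ S then b i else a i)]
  rw [← Finset.sum_coe_sort (Finset.univ) (fun S => (-1 : ℤ) ^ (Finset.univ.card - Finset.card S) •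
    F fun i => if i ∈ Finset.univ \ S then a i else b i)]
  apply Finset.sum_congr rfl
  intro S _
  rw [Finset.card_univ]
  have hpt : (fun i => if i ∈ Finset.univ \ (S : Finset ι) then a i else b i) =
      (fun i => if i ∈ (S : Finset ι) then b i else a i) := by
    funext i
    by_cases h : i ∈ (S : Finset ι) <;> simp [h]
  rw [hpt]

lemma Dif_congr {J : Finset ι} {a a' : ι → ℝ} (b : ι → ℝ) (h : ∀ i ∈ J, a i = a' i) :
    Dif F J a b = Dif F J a' b := by
  unfold Dif
  refine Finset.sum_congr rfl (fun S hS => ?_)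
  have hpt : (fun i => if i ∈ J \ S then a i else b i) =
      (fun i => if i ∈ J \ S then a' i else b i) := by
    funext i
    by_cases hi : i ∈ J \ S
    · simp only [hi, if_true]; exact h i (Finset.mem_sdiff.1 hi).1
    · simp [hi]
  rw [hpt]

lemma Dif_insert {J : Finset ι} {l : ι} (hl : l ∉ J) (a b : ι → ℝ) :
    Dif F (insert l J) a b = Dif F J a b - Dif F J a (Function.update b l (a l)) := by
  unfold Dif
  have hdisj : Disjoint J.powerset (J.powerset.image (insert l)) := by
    rw [Finset.disjoint_left]
    rintro S hS hS'
    obtain ⟨S', hS', rfl⟩ := Finset.mem_image.1 hS'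
    exact hl (Finset.mem_powerset.1 hS (Finset.mem_insert_self l S'))
  have hinj : ∀ x ∈ J.powerset, ∀ y ∈ J.powerset, insert l x = insert l y → x = y := by
    intro x hx y hy hxy
    have hlx : l ∉ x := fun h => hl (Finset.mem_powerset.1 hx h)
    have hly : l ∉ y := fun h => hl (Finset.mem_powerset.1 hy h)
    rw [← Finset.erase_insert hlx, ← Finset.erase_insert hly, hxy]
  rw [Finset.powerset_insert, Finset.sum_union hdisj, Finset.sum_image hinj]
  have hcards : (insert l J).card = J.card + 1 := Finset.card_insert_of_notMem hl
  have himage : ∀ S ∈ J.powerset, (-1 : ℤ) ^ ((insert l J).card - (insert l S).card) •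
      F (fun i => if i ∈ (insert l J) \ (insert l S) then a i else b i) =
      (-1 : ℤ) ^ (J.card - S.card) • F (fun i => if i ∈ J \ S then a i else b i) := by
    intro S hS
    have hlS : l ∉ S := fun h => hl (Finset.mem_powerset.1 hS h)
    have h1 : (insert l S).card = S.card + 1 := Finset.card_insert_of_notMem hlS
    have h2 : (insert l J) \ (insert l S) = J \ S := by
      ext i
      simp only [Finset.mem_sdiff, Finset.mem_insert]
      constructor
      · rintro ⟨h3 | h3, h4⟩
        · exact absurd (Or.inl h3) h4
        · exact ⟨h3, fun h5 => h4 (Or.inr h5)⟩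
      · rintro ⟨h3, h4⟩
        refine ⟨Or.inr h3, ?_⟩
        rintro (rfl | h5)
        · exact hl h3
        · exact h4 h5
    rw [hcards, h1, Nat.succ_sub_succ, h2]
  have hnonimage : ∀ S ∈ J.powerset, (-1 : ℤ) ^ ((insert l J).card - S.card) •
      F (fun i => if i ∈ (insert l J) \ S then a i else b i) =
      -((-1 : ℤ) ^ (J.card - S.card) •
        F (fun i => if i ∈ J \ S then a i else (Function.update b l (a l)) i)) := by
    intro S hS
    have hScard : S.card ≤ J.card := Finset.card_le_card (Finset.mem_powerset.1 hS)
    have hlS : l ∉ S := fun h => hl (Finset.mem_powerset.1 hS h)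
    have hexp : (insert l J).card - S.card = (J.card - S.card) + 1 := by
      rw [hcards]; omega
    have hpt : (fun i => if i ∈ (insert l J) \ S then a i else b i) =
        (fun i => if i ∈ J \ S then a i else (Function.update b l (a l)) i) := by
      funext i
      by_cases h : i = l
      · have h1 : i ∈ (insert l J) \ S := by
          rw [h]; exact Finset.mem_sdiff.2 ⟨Finset.mem_insert_self l J, hlS⟩
        have h2 : i ∉ J \ S := by
          rw [h]; exact fun h' => hl (Finset.mem_sdiff.1 h').1
        rw [if_pos h1, if_neg h2, h, Function.update_self]
      · have h1 : i ∈ (insert l J) \ S ↔ i ∈ J \ S := by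
          simp only [Finset.mem_sdiff, Finset.mem_insert]
          constructor
          · rintro ⟨h3 | h3, h4⟩
            · exact absurd h3 h
            · exact ⟨h3, h4⟩
          · rintro ⟨h3, h4⟩; exact ⟨Or.inr h3, h4⟩
        by_cases h2 : i ∈ J \ S
        · rw [if_pos (h1.2 h2), if_pos h2]
        · rw [if_neg (fun h' => h2 (h1.1 h')), if_neg h2, Function.update_of_ne h]
    rw [hexp, hpt, pow_succ, mul_comm, neg_one_mul, neg_smul]
  rw [Finset.sum_congr rfl himage, Finset.sum_congr rfl hnonimage, Finset.sum_neg_distrib]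
  abel

/-- Positivity of all iterated differences, by downward induction from the volume
condition, using σ-completeness of `G`. -/
lemma Dif_nonneg (hF : IsSR1 F) (hsc : MonSigmaComplete G) :
    ∀ (J : Finset ι) (a b : ι → ℝ), (∀ i ∈ J, a i ≤ b i) → 0 ≤ Dif F J a b := by
  suffices key : ∀ (d : ℕ) (J : Finset ι), Fintype.card ι - J.card = d →
      ∀ a b : ι → ℝ, (∀ i ∈ J, a i ≤ b i) → 0 ≤ Dif F J a b by
    intro J a b hab
    exact key _ J rfl a b hab
  intro d
  induction d with
  | zero =>
    intro J hJ a b hab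
    have hcard : J.card = Fintype.card ι := by
      have := Finset.card_le_univ J
      omega
    have hJu : J = Finset.univ := Finset.eq_univ_of_card J hcard
    subst hJu
    rw [Dif_univ]
    exact hF.vol a b (fun i => hab i (Finset.mem_univ i))
  | succ d ih =>
    intro J hJ a b hab
    have hJne : J ≠ Finset.univ := by
      intro h
      rw [h, Finset.card_univ] at hJ
      omega
    obtain ⟨l, hl⟩ : ∃ l, l ∉ J := by
      by_contra h
      push_neg at h
      exact hJne (Finset.eq_univ_iff_forall.2 h)
    have hJl : Fintype.card ι - (insert l J).card = d := by
      rw [Finset.card_insert_of_notMem hl]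
      have := Finset.card_lt_card (Finset.ssubset_univ_iff.2 hJne)
      rw [Finset.card_univ] at this
      omega
    obtain ⟨N₀, hN₀⟩ := exists_nat_ge (-(b l))
    set c : ℕ → ℝ := fun n => -((n : ℝ) + N₀) with hc
    have hcanti : Antitone c := by
      intro n m hnm
      simp only [hc, neg_le_neg_iff]
      have : (n : ℝ) ≤ m := Nat.cast_le.2 hnm
      linarith
    have hcunb : ∀ B : ℝ, ∃ n, c n ≤ B := by
      intro B
      obtain ⟨n, hn⟩ := exists_nat_ge (-B)
      refine ⟨n, ?_⟩
      simp only [hc]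
      have hN0 : (0 : ℝ) ≤ (N₀ : ℝ) := Nat.cast_nonneg _
      linarith
    -- the two corner families
    set pt0 : Finset ι → ι → ℝ := fun S i => if i ∈ J \ S then a i else b i with hpt0
    have hψle : ∀ n : ℕ, Dif F J a (Function.update b l (c n)) ≤ Dif F J a b := by
      intro n
      set a' : ι → ℝ := Function.update a l (c n) with ha'
      have ha'b : ∀ i ∈ insert l J, a' i ≤ b i := by
        intro i hi
        rcases Finset.mem_insert.1 hi with rfl | hi
        · rw [ha']
          simp only [Function.update_self]
          have : c n ≤ -(N₀ : ℝ) := by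
            simp only [hc]
            have : (0:ℝ) ≤ n := Nat.cast_nonneg n
            linarith
          linarith
        · rw [ha', Function.update_of_ne (fun h => hl (by rw [← h]; exact hi))]
          exact hab i hi
      have h0 : 0 ≤ Dif F (insert l J) a' b := ih (insert l J) hJl a' b ha'b
      rw [Dif_insert hl] at h0
      have e1 : Dif F J a' b = Dif F J a b :=
        Dif_congr b (fun i hi => by rw [ha', Function.update_of_ne (fun h => hl (by rw [← h]; exact hi))])
      have e2 : Dif F J a' (Function.update b (l : ι) (a' l)) =
          Dif F J a (Function.update b l (c n)) := by
        have hal : a' l = c n := by rw [ha']; simp [Function.update_self]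
        rw [hal]
        exact Dif_congr _ (fun i hi => by rw [ha', Function.update_of_ne (fun h => hl (by rw [← h]; exact hi))])
      rw [e1, e2] at h0
      exact sub_nonneg.1 h0
    set Pos := J.powerset.filter (fun S => Even (J.card - S.card)) with hPos
    set Neg := J.powerset.filter (fun S => ¬ Even (J.card - S.card)) with hNeg
    have hcorner : ∀ (S : Finset ι) (n : ℕ),
        (fun i => if i ∈ J \ S then a i else (Function.update b l (c n)) i) =
          Function.update (pt0 S) l (c n) := by
      intro S n
      funext i
      by_cases h : i = l
      · have h2 : i ∉ J \ S := by
          rw [h]; exact fun h' => hl (Finset.mem_sdiff.1 h').1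
        rw [if_neg h2, h, Function.update_self, Function.update_self]
      · have hR : Function.update (pt0 S) l (c n) i = pt0 S i :=
          Function.update_of_ne h (c n) (pt0 S)
        rw [hR]
        simp only [hpt0]
        by_cases h2 : i ∈ J \ S
        · rw [if_pos h2, if_pos h2]
        · rw [if_neg h2, if_neg h2, Function.update_of_ne h]
    have hψ : ∀ n, Dif F J a (Function.update b l (c n)) =
        (∑ S ∈ Pos, F (Function.update (pt0 S) l (c n))) -
        (∑ S ∈ Neg, F (Function.update (pt0 S) l (c n))) := by
      intro n
      unfold Dif
      rw [← Finset.sum_filter_add_sum_filter_not J.powerset (fun S => Even (J.card - S.card))]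
      have hP : ∑ S ∈ Pos, (-1 : ℤ) ^ (J.card - S.card) •
          F (fun i => if i ∈ J \ S then a i else (Function.update b l (c n)) i) =
          ∑ S ∈ Pos, F (Function.update (pt0 S) l (c n)) := by
        refine Finset.sum_congr rfl (fun S hS => ?_)
        have he : Even (J.card - S.card) := (Finset.mem_filter.1 hS).2
        rw [he.neg_one_pow, one_smul, hcorner S n]
      have hNn : ∑ S ∈ Neg, (-1 : ℤ) ^ (J.card - S.card) •
          F (fun i => if i ∈ J \ S then a i else (Function.update b l (c n)) i) =
          -∑ S ∈ Neg, F (Function.update (pt0 S) l (c n)) := by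
        rw [← Finset.sum_neg_distrib]
        refine Finset.sum_congr rfl (fun S hS => ?_)
        have he : Odd (J.card - S.card) := Nat.not_even_iff_odd.1 (Finset.mem_filter.1 hS).2
        rw [he.neg_one_pow, neg_one_zsmul, hcorner S n]
      rw [hP, hNn, sub_eq_add_neg]
    have hXge : ∀ n, -Dif F J a b ≤ ∑ S ∈ Neg, F (Function.update (pt0 S) l (c n)) := by
      intro n
      have h1 := hψle n
      rw [hψ n] at h1
      have hP0 : 0 ≤ ∑ S ∈ Pos, F (Function.update (pt0 S) l (c n)) := by
        have := sum_le_sum_cov (T := Pos)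
          (f := fun _ => (0 : ℤ ×ₗ G)) (g := fun S => F (Function.update (pt0 S) l (c n)))
          (fun S _ => F_nonneg hF _)
        simpa using this
      have h2 : -Dif F J a b ≤ -((∑ S ∈ Pos, F (Function.update (pt0 S) l (c n))) -
          (∑ S ∈ Neg, F (Function.update (pt0 S) l (c n)))) := neg_le_neg_iff.mpr h1
      have h3 : -((∑ S ∈ Pos, F (Function.update (pt0 S) l (c n))) -
          (∑ S ∈ Neg, F (Function.update (pt0 S) l (c n)))) =
          (∑ S ∈ Neg, F (Function.update (pt0 S) l (c n))) -
          (∑ S ∈ Pos, F (Function.update (pt0 S) l (c n))) := by abel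
      rw [h3] at h2
      exact h2.trans (sub_le_self _ hP0)
    have hfinal : -Dif F J a b ≤ 0 :=
      sumGLB_lex hsc Neg (fun S n => F (Function.update (pt0 S) l (c n)))
        (fun S _ => F_seq_antitone hF l (pt0 S) hcanti)
        (fun S _ n => F_nonneg hF _)
        (fun S _ => F_seq_lb hF l (pt0 S) hcunb)
        _ hXge
    exact neg_nonpos.1 hfinal

/-- Corner point of the box `[a,b]`: coordinates in `U` at the top. -/
def cpt (a b : ι → ℝ) (U : Finset ι) : ι → ℝ := fun i => if i ∈ U then b i else a i

lemma pair_pos (hF : IsSR1 F) (hsc : MonSigmaComplete G) {a b : ι → ℝ}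
    (hab : ∀ i, a i ≤ b i) {C : Finset ι} {l j : ι}
    (hl : l ∉ C) (hj : j ∉ C) (hlj : l ≠ j) :
    F (cpt a b (insert l C)) + F (cpt a b (insert j C)) ≤
      F (cpt a b (insert l (insert j C))) + F (cpt a b C) := by
  set β : ι → ℝ := cpt a b (insert l (insert j C)) with hβ
  have hlj' : l ∉ ({j} : Finset ι) := by simp [hlj]
  have hβl : β l = b l := by
    rw [hβ]; unfold cpt; simp
  have hβj : β j = b j := by
    rw [hβ]; unfold cpt; simp
  have hmem : ∀ i ∈ insert l ({j} : Finset ι), a i ≤ β i := by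
    intro i hi
    rcases Finset.mem_insert.1 hi with rfl | hi
    · rw [hβl]; exact hab i
    · rw [Finset.mem_singleton.1 hi, hβj]; exact hab j
  have h0 : 0 ≤ Dif F (insert l ({j} : Finset ι)) a β := Dif_nonneg hF hsc _ a β hmem
  have hexp : Dif F (insert l ({j} : Finset ι)) a β =
      (F β - F (Function.update β j (a j))) -
      (F (Function.update β l (a l)) -
        F (Function.update (Function.update β l (a l)) j (a j))) := by
    rw [Dif_insert hlj' a β]
    have hsing : ∀ b' : ι → ℝ, Dif F ({j} : Finset ι) a b' =
        F b' - F (Function.update b' j (a j)) := by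
      intro b'
      have : ({j} : Finset ι) = insert j ∅ := rfl
      rw [this, Dif_insert (Finset.notMem_empty j) a b', Dif_empty, Dif_empty]
    rw [hsing β, hsing (Function.update β l (a l))]
  have e_j : Function.update β j (a j) = cpt a b (insert l C) := by
    funext i
    by_cases h : i = j
    · rw [h, Function.update_self]
      have : j ∉ insert l C := by
        simp only [Finset.mem_insert]
        rintro (rfl | h'); exacts [hlj rfl, hj h']
      unfold cpt; rw [if_neg this]
    · rw [Function.update_of_ne h, hβ]
      unfold cpt
      have : i ∈ insert l (insert j C) ↔ i ∈ insert l C := by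
        simp only [Finset.mem_insert]
        constructor
        · rintro (h1 | h1 | h1); exacts [Or.inl h1, absurd h1 h, Or.inr h1]
        · rintro (h1 | h1); exacts [Or.inl h1, Or.inr (Or.inr h1)]
      by_cases h2 : i ∈ insert l C
      · rw [if_pos (this.2 h2), if_pos h2]
      · rw [if_neg (fun h' => h2 (this.1 h')), if_neg h2]
  have e_l : Function.update β l (a l) = cpt a b (insert j C) := by
    funext i
    by_cases h : i = l
    · rw [h, Function.update_self]
      have : l ∉ insert j C := by
        simp only [Finset.mem_insert]
        rintro (rfl | h'); exacts [hlj rfl, hl h']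
      unfold cpt; rw [if_neg this]
    · rw [Function.update_of_ne h, hβ]
      unfold cpt
      have : i ∈ insert l (insert j C) ↔ i ∈ insert j C := by
        simp only [Finset.mem_insert]
        constructor
        · rintro (h1 | h1); exacts [absurd h1 h, h1]
        · exact fun h1 => Or.inr h1
      by_cases h2 : i ∈ insert j C
      · rw [if_pos (this.2 h2), if_pos h2]
      · rw [if_neg (fun h' => h2 (this.1 h')), if_neg h2]
  have e_lj : Function.update (Function.update β l (a l)) j (a j) = cpt a b C := by
    rw [e_l]
    funext i
    by_cases h : i = j
    · rw [h, Function.update_self]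
      unfold cpt; rw [if_neg hj]
    · rw [Function.update_of_ne h]
      unfold cpt
      have : i ∈ insert j C ↔ i ∈ C := by
        simp only [Finset.mem_insert]
        constructor
        · rintro (h1 | h1); exacts [absurd h1 h, h1]
        · exact fun h1 => Or.inr h1
      by_cases h2 : i ∈ C
      · rw [if_pos (this.2 h2), if_pos h2]
      · rw [if_neg (fun h' => h2 (this.1 h')), if_neg h2]
  rw [hexp, e_lj, e_j, e_l] at h0
  have heq : (F β - F (cpt a b (insert l C))) - (F (cpt a b (insert j C)) - F (cpt a b C)) =
      (F β + F (cpt a b C)) - (F (cpt a b (insert l C)) + F (cpt a b (insert j C))) := by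
    abel
  rw [heq] at h0
  exact sub_nonneg.1 h0

lemma delta_mono (hF : IsSR1 F) (hsc : MonSigmaComplete G) {a b : ι → ℝ}
    (hab : ∀ i, a i ≤ b i) (l : ι) :
    ∀ (n : ℕ) (C C' : Finset ι), C ⊆ C' → l ∉ C' → (C' \ C).card = n →
      F (cpt a b (insert l C)) - F (cpt a b C) ≤
        F (cpt a b (insert l C')) - F (cpt a b C') := by
  intro n
  induction n with
  | zero =>
    intro C C' hCC hl hcard
    have h1 : C' \ C = ∅ := Finset.card_eq_zero.1 hcard
    have h2 : C' ⊆ C := Finset.sdiff_eq_empty_iff_subset.1 h1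
    have h3 : C' = C := Finset.Subset.antisymm h2 hCC
    rw [h3]
  | succ n ih =>
    intro C C' hCC hl hcard
    have hne : (C' \ C).Nonempty := Finset.card_pos.1 (by omega)
    obtain ⟨j, hjmem⟩ := hne
    have hjC' : j ∈ C' := (Finset.mem_sdiff.1 hjmem).1
    have hjC : j ∉ C := (Finset.mem_sdiff.1 hjmem).2
    set C'' := C'.erase j with hC''
    have hsub : C ⊆ C'' := (Finset.subset_erase).2 ⟨hCC, hjC⟩
    have hlC'' : l ∉ C'' := fun h => hl (Finset.erase_subset j C' h)
    have hcard'' : (C'' \ C).card = n := by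
      rw [hC'', Finset.erase_sdiff_comm, Finset.card_erase_of_mem hjmem]
      omega
    have h1 := ih C C'' hsub hlC'' hcard''
    refine h1.trans ?_
    have hjC'' : j ∉ C'' := Finset.notMem_erase j C'
    have hlj : l ≠ j := fun h => hl (h ▸ hjC')
    have hpair := pair_pos hF hsc hab hlC'' hjC'' hlj
    have hins : insert j C'' = C' := Finset.insert_erase hjC'
    rw [hins] at hpair
    exact (sub_le_sub_iff).2 (by
      calc F (cpt a b (insert l C'')) + F (cpt a b C')
          ≤ F (cpt a b (insert l C')) + F (cpt a b C'') := hpair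
        _ = F (cpt a b (insert l C')) + F (cpt a b C'') := rfl)

lemma supermod (hF : IsSR1 F) (hsc : MonSigmaComplete G) {a b : ι → ℝ}
    (hab : ∀ i, a i ≤ b i) :
    ∀ (n : ℕ) (A B : Finset ι), (A \ B).card = n →
      F (cpt a b A) + F (cpt a b B) ≤ F (cpt a b (A ∪ B)) + F (cpt a b (A ∩ B)) := by
  intro n
  induction n with
  | zero =>
    intro A B hcard
    have h1 : A ⊆ B := Finset.sdiff_eq_empty_iff_subset.1 (Finset.card_eq_zero.1 hcard)
    rw [Finset.union_eq_right.2 h1, Finset.inter_eq_left.2 h1]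
    exact (add_comm (F (cpt a b A)) (F (cpt a b B))).le
  | succ n ih =>
    intro A B hcard
    have hne : (A \ B).Nonempty := Finset.card_pos.1 (by omega)
    obtain ⟨l, hlmem⟩ := hne
    have hlA : l ∈ A := (Finset.mem_sdiff.1 hlmem).1
    have hlB : l ∉ B := (Finset.mem_sdiff.1 hlmem).2
    set A' := A.erase l with hA'
    have hcard' : (A' \ B).card = n := by
      rw [hA', Finset.erase_sdiff_comm, Finset.card_erase_of_mem hlmem]
      omega
    have hih := ih A' B hcard'
    have hlA' : l ∉ A' := Finset.notMem_erase l A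
    have hlU : l ∉ A' ∪ B := by
      simp only [Finset.mem_union]
      rintro (h | h); exacts [hlA' h, hlB h]
    have hdm := delta_mono hF hsc hab l ((A' ∪ B) \ A').card A' (A' ∪ B)
      Finset.subset_union_left hlU rfl
    have hinsA : insert l A' = A := Finset.insert_erase hlA
    have hinsU : insert l (A' ∪ B) = A ∪ B := by
      rw [← hinsA, Finset.insert_union]
    have hintr : A' ∩ B = A ∩ B := by
      rw [hA', Finset.erase_inter, Finset.erase_eq_of_notMem]
      simp only [Finset.mem_inter]
      rintro ⟨_, h⟩; exact hlB h
    rw [hinsA, hinsU] at hdm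
    rw [hintr] at hih
    -- combine
    have h3 := add_le_add hdm hih
    have e1 : (F (cpt a b A) - F (cpt a b A')) + (F (cpt a b A') + F (cpt a b B)) =
        F (cpt a b A) + F (cpt a b B) := by abel
    have e2 : (F (cpt a b (A ∪ B)) - F (cpt a b (A' ∪ B))) +
        (F (cpt a b (A' ∪ B)) + F (cpt a b (A ∩ B))) =
        F (cpt a b (A ∪ B)) + F (cpt a b (A ∩ B)) := by abel
    rw [e1, e2] at h3
    exact h3

end SR

end Aux6

open Paper in
/-- Lemma 3.2: for an `n`-dimensional spectral resolution `F` on the perfect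
effect algebra `Γ_ea(ℤ ×ₗ G,(1,0))`, splitting the `n` coordinates as `Fin k ⊕ Fin m`
(`1 ≤ k`, `1 ≤ m`), the infimum `⋀{F(s̄,r̄) : r̄ ≫ t̄}` is the least upper bound of the
family of infima `⋀{F(q̄,r̄) : r̄ ≫ t̄}` over `q̄ ≪ s̄`, provided these infima exist. -/
theorem statement_6 {G : Type*} [AddCommGroup G] [PartialOrder G]
    [CovariantClass G G (· + ·) (· ≤ ·)]
    (hdir : DirectedPO G) (hip : RieszInterp G) (hsc : MonSigmaComplete G)
    {k m : ℕ} (hk : 1 ≤ k) (hm : 1 ≤ m)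
    (F : ((Fin k ⊕ Fin m) → ℝ) → ℤ ×ₗ G) (hF : IsSR1 F)
    (s : Fin k → ℝ) (t : Fin m → ℝ)
    (g : (Fin k → ℝ) → ℤ ×ₗ G)
    (hg : ∀ q : Fin k → ℝ, (∀ i, q i < s i) →
      IsGLB {y | ∃ r : Fin m → ℝ, (∀ j, t j < r j) ∧ y = F (Sum.elim q r)} (g q))
    (M : ℤ ×ₗ G)
    (hM : IsGLB {y | ∃ r : Fin m → ℝ, (∀ j, t j < r j) ∧ y = F (Sum.elim s r)} M) :
    IsLUB {y | ∃ q : Fin k → ℝ, (∀ i, q i < s i) ∧ y = g q} M := by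
  classical
  constructor
  · -- M is an upper bound of the family of infima
    rintro y ⟨q, hq, rfl⟩
    refine hM.2 ?_
    rintro y' ⟨r, hr, rfl⟩
    have h1 : g q ≤ F (Sum.elim q r) := (hg q hq).1 ⟨r, hr, rfl⟩
    refine h1.trans (Aux6.F_mono hF (fun i => ?_))
    cases i with
    | inl x => exact (hq x).le
    | inr j => exact le_refl _
  · -- M is the least upper bound
    intro u hu
    set r1 : Fin m → ℝ := fun j => t j + 1 with hr1
    have hr1t : ∀ j, t j < r1 j := fun j => by rw [hr1]; exact lt_add_one _
    have key1 : ∀ q : Fin k → ℝ, (∀ i, q i < s i) →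
        F (Sum.elim q r1) ≤ u + F (Sum.elim s r1) - M := by
      intro q hq
      have hlow : M + F (Sum.elim q r1) - F (Sum.elim s r1) ∈
          lowerBounds {y | ∃ r' : Fin m → ℝ, (∀ j, t j < r' j) ∧ y = F (Sum.elim q r')} := by
        rintro y ⟨r', hr', rfl⟩
        set r'' : Fin m → ℝ := fun j => min (r1 j) (r' j) with hr''
        have hr''t : ∀ j, t j < r'' j := fun j => lt_min (hr1t j) (hr' j)
        have hM1 : M ≤ F (Sum.elim s r'') := hM.1 ⟨r'', hr''t, rfl⟩
        -- the rectangle inequality via supermodularity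
        set a : (Fin k ⊕ Fin m) → ℝ := Sum.elim q r'' with ha
        set b : (Fin k ⊕ Fin m) → ℝ := Sum.elim s r1 with hb
        have hab : ∀ i, a i ≤ b i := by
          intro i
          cases i with
          | inl x => exact (hq x).le
          | inr j => exact min_le_left _ _
        set A : Finset (Fin k ⊕ Fin m) := Finset.univ.filter (fun i => i.isLeft) with hA
        set B : Finset (Fin k ⊕ Fin m) := Finset.univ.filter (fun i => i.isRight) with hB
        have hptA : Aux6.cpt a b A = Sum.elim s r'' := by
          funext i
          cases i with
          | inl x =>
            have : (Sum.inl x : Fin k ⊕ Fin m) ∈ A := by simp [hA]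
            simp [Aux6.cpt, this, hb]
          | inr j =>
            have : (Sum.inr j : Fin k ⊕ Fin m) ∉ A := by simp [hA]
            simp [Aux6.cpt, this, ha]
        have hptB : Aux6.cpt a b B = Sum.elim q r1 := by
          funext i
          cases i with
          | inl x =>
            have : (Sum.inl x : Fin k ⊕ Fin m) ∉ B := by simp [hB]
            simp [Aux6.cpt, this, ha]
          | inr j =>
            have : (Sum.inr j : Fin k ⊕ Fin m) ∈ B := by simp [hB]
            simp [Aux6.cpt, this, hb]
        have hptU : Aux6.cpt a b (A ∪ B) = Sum.elim s r1 := by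
          funext i
          have : i ∈ A ∪ B := by
            cases i with
            | inl x => simp [hA, hB]
            | inr j => simp [hA, hB]
          simp [Aux6.cpt, this, hb]
        have hptI : Aux6.cpt a b (A ∩ B) = Sum.elim q r'' := by
          funext i
          have : i ∉ A ∩ B := by
            cases i with
            | inl x => simp [hA, hB]
            | inr j => simp [hA, hB]
          simp [Aux6.cpt, this, ha]
        have hrect := Aux6.supermod hF hsc hab (A \ B).card A B rfl
        rw [hptA, hptB, hptU, hptI] at hrect
        -- hrect : F (el s r'') + F (el q r1) ≤ F (el s r1) + F (el q r'')
        have hmono2 : F (Sum.elim q r'') ≤ F (Sum.elim q r') := by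
          refine Aux6.F_mono hF (fun i => ?_)
          cases i with
          | inl x => exact le_refl _
          | inr j => exact min_le_right _ _
        calc M + F (Sum.elim q r1) - F (Sum.elim s r1)
            ≤ F (Sum.elim s r'') + F (Sum.elim q r1) - F (Sum.elim s r1) :=
              sub_le_sub_right (add_le_add_left hM1 _) _
          _ ≤ F (Sum.elim q r'') := by
              rw [sub_le_iff_le_add]
              exact hrect.trans (add_comm (F (Sum.elim s r1)) (F (Sum.elim q r''))).le
          _ ≤ F (Sum.elim q r') := hmono2
      have h2 : M + F (Sum.elim q r1) - F (Sum.elim s r1) ≤ g q := (hg q hq).2 hlow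
      have h4 : M + F (Sum.elim q r1) - F (Sum.elim s r1) ≤ u :=
        h2.trans (hu ⟨q, hq, rfl⟩)
      calc F (Sum.elim q r1) =
          (M + F (Sum.elim q r1) - F (Sum.elim s r1)) + (F (Sum.elim s r1) - M) := by abel
        _ ≤ u + (F (Sum.elim s r1) - M) := add_le_add_left h4 _
        _ = u + F (Sum.elim s r1) - M := by abel
    have hub : u + F (Sum.elim s r1) - M ∈
        upperBounds (F '' {σ' | ∀ i, σ' i < Sum.elim s r1 i}) := by
      rintro y ⟨σ', hσ', rfl⟩
      have hq : ∀ x, (σ' ∘ Sum.inl) x < s x := fun x => hσ' (Sum.inl x)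
      have h5 : F σ' ≤ F (Sum.elim (σ' ∘ Sum.inl) r1) := by
        refine Aux6.F_mono hF (fun i => ?_)
        cases i with
        | inl x => exact le_refl _
        | inr j => exact (hσ' (Sum.inr j)).le
      exact h5.trans (key1 _ hq)
    have h6 : F (Sum.elim s r1) ≤ u + F (Sum.elim s r1) - M :=
      (hF.leftCont (Sum.elim s r1)).2 hub
    calc M = F (Sum.elim s r1) + (M - F (Sum.elim s r1)) := by abel
      _ ≤ (u + F (Sum.elim s r1) - M) + (M - F (Sum.elim s r1)) := add_le_add_left h6 _
      _ = u := by abel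
end

section
/- Let F : ℝⁿ → E be an n-dimensional spectral resolution on the perfect effect algebra E = Γ_ea(ℤ ×ₗ G,(1,0)). Extend F to arguments of the forms −∞, r, r⁺ (r ∈ ℝ) and +∞ in each coordinate by the conventions: the value with i-th argument r⁺ is the greatest lower bound of the values with i-th argument ranging over reals strictly greater than r; the value with i-th argument +∞ is the least upper bound over the i-th argument ranging over ℝ; the value with i-th argument −∞ is 0 (all these extended values exist and are unambiguous for a spectral resolution). Order these symbols by −∞ < r ≤ r⁺ < r' ≤ r'⁺ < +∞ whenever r < r' are reals. Then for any indices i₁ < ⋯ < i_k in {1,…,n} and any endpoints α_l ≤ β_l of the above forms (l = 1,…,k), the iterated difference Δ_{i₁}(α₁,β₁)⋯Δ_{i_k}(α_k,β_k)F(v̄) ≥ 0 for every choice v̄ of real values of the remaining coordinates, where Δᵢ(α,β)F is (the extension of F with i-th argument β) minus (the extension of F with i-th argument α). -/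
open Classical

namespace Paper

/-- The extended real symbols `-∞`, `r`, `r⁺` (`r : ℝ`) and `+∞` used as arguments of
extended spectral resolutions. -/
inductive RHat : Type
  | bot : RHat
  | real : ℝ → RHat
  | realPlus : ℝ → RHat
  | top : RHat

/-- The order `-∞ < r ≤ r⁺ < r' ≤ r'⁺ < +∞` (for reals `r < r'`) on the symbols `RHat`. -/
def RHat.le : RHat → RHat → Prop
  | .bot, _ => True
  | .real _, .bot => False
  | .real r, .real s => r ≤ s
  | .real r, .realPlus s => r ≤ s
  | .real _, .top => True
  | .realPlus _, .bot => False
  | .realPlus r, .real s => r < s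
  | .realPlus r, .realPlus s => r ≤ s
  | .realPlus _, .top => True
  | .top, .top => True
  | .top, _ => False

variable {G : Type*} [AddCommGroup G] [PartialOrder G]
variable {ι : Type*} [Fintype ι] [DecidableEq ι]

/-- `Fh` is the (unambiguous) extension of `F` to arguments in `RHat`:
it agrees with `F` on real arguments; at an argument `r⁺` it is the greatest lower
bound over real `i`-th arguments `> r`; at `+∞` it is the least upper bound over real
`i`-th arguments; at `-∞` it equals `0`. -/
def IsExtension (F : (ι → ℝ) → ℤ ×ₗ G) (Fh : (ι → RHat) → ℤ ×ₗ G) : Prop :=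
  (∀ v : ι → ℝ, Fh (fun i => RHat.real (v i)) = F v) ∧
  (∀ (u : ι → RHat) (i : ι) (r : ℝ), u i = RHat.realPlus r →
    IsGLB {y | ∃ s : ℝ, r < s ∧ y = Fh (Function.update u i (RHat.real s))} (Fh u)) ∧
  (∀ (u : ι → RHat) (i : ι), u i = RHat.top →
    IsLUB {y | ∃ s : ℝ, y = Fh (Function.update u i (RHat.real s))} (Fh u)) ∧
  (∀ (u : ι → RHat) (i : ι), u i = RHat.bot → Fh u = 0)

/-- The difference `Δᵢ(α,β)F`, viewed as a function of the remaining coordinates. -/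
noncomputable def deltaFun (Fh : (ι → RHat) → ℤ ×ₗ G) (i : ι) (α β : RHat) :
    ({j : ι // j ≠ i} → ℝ) → ℤ ×ₗ G := fun s =>
  Fh (fun j => if h : j = i then β else RHat.real (s ⟨j, h⟩)) -
  Fh (fun j => if h : j = i then α else RHat.real (s ⟨j, h⟩))

/-- `F'` has characteristic point `c`: `F'(v) ∈ {1} × G` iff `v ≫ c`. -/
def HasCP {κ : Type*} (F' : (κ → ℝ) → ℤ ×ₗ G) (c : κ → ℝ) : Prop :=
  ∀ v, ((ofLex (F' v)).1 = 1 ↔ ∀ j, c j < v j)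

end Paper


namespace SRAux
open Paper

noncomputable instance lexOACG {G : Type*} [AddCommGroup G] [PartialOrder G]
    [CovariantClass G G (· + ·) (· ≤ ·)] : IsOrderedAddMonoid (ℤ ×ₗ G) :=
  { add_le_add_left := by
      intro a b h c
      rw [add_comm a c, add_comm b c]
      rcases Prod.Lex.le_iff.mp h with h1 | ⟨h1, h2⟩
      · refine Prod.Lex.le_iff.mpr (Or.inl ?_)
        show (ofLex c).1 + (ofLex a).1 < (ofLex c).1 + (ofLex b).1
        exact add_lt_add_right h1 _
      · refine Prod.Lex.le_iff.mpr (Or.inr ⟨?_, ?_⟩)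
        · show (ofLex c).1 + (ofLex a).1 = (ofLex c).1 + (ofLex b).1
          rw [h1]
        · show (ofLex c).2 + (ofLex a).2 ≤ (ofLex c).2 + (ofLex b).2
          exact add_le_add_right h2 _ }

section OrderLemmas
variable {M : Type*} [AddCommGroup M] [PartialOrder M] [IsOrderedAddMonoid M]

lemma isGLB_add_mono {f g : ℝ → M} {S : Set ℝ}
    (hf : Monotone f) (hg : Monotone g) {Lf Lg : M}
    (hLf : IsGLB (f '' S) Lf) (hLg : IsGLB (g '' S) Lg) :
    IsGLB ((fun s => f s + g s) '' S) (Lf + Lg) := by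
  constructor
  · rintro _ ⟨s, hs, rfl⟩
    exact add_le_add (hLf.1 ⟨s, hs, rfl⟩) (hLg.1 ⟨s, hs, rfl⟩)
  · intro l hl
    have key : ∀ s ∈ S, l - Lf ≤ g s := by
      intro s hs
      have h1 : l - g s ∈ lowerBounds (f '' S) := by
        rintro _ ⟨s', hs', rfl⟩
        rcases le_total s' s with h | h
        · have h2 : l ≤ f s' + g s' := hl ⟨s', hs', rfl⟩
          have h3 : l ≤ f s' + g s := h2.trans (add_le_add_right (hg h) _)
          exact sub_le_iff_le_add.2 h3
        · have h2 : l ≤ f s + g s := hl ⟨s, hs, rfl⟩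
          exact (sub_le_iff_le_add.2 h2).trans (hf h)
      have h2 : l - g s ≤ Lf := hLf.2 h1
      exact sub_le_comm.1 h2
    have h3 : l - Lf ≤ Lg := hLg.2 (by rintro _ ⟨s, hs, rfl⟩; exact key s hs)
    exact sub_le_iff_le_add'.1 h3

lemma isLUB_add_mono {f g : ℝ → M} {S : Set ℝ}
    (hf : Monotone f) (hg : Monotone g) {Lf Lg : M}
    (hLf : IsLUB (f '' S) Lf) (hLg : IsLUB (g '' S) Lg) :
    IsLUB ((fun s => f s + g s) '' S) (Lf + Lg) := by
  constructor
  · rintro _ ⟨s, hs, rfl⟩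
    exact add_le_add (hLf.1 ⟨s, hs, rfl⟩) (hLg.1 ⟨s, hs, rfl⟩)
  · intro l hl
    have key : ∀ s ∈ S, g s ≤ l - Lf := by
      intro s hs
      have h1 : l - g s ∈ upperBounds (f '' S) := by
        rintro _ ⟨s', hs', rfl⟩
        rcases le_total s' s with h | h
        · have h2 : f s + g s ≤ l := hl ⟨s, hs, rfl⟩
          exact le_sub_iff_add_le.2 ((add_le_add_left (hf h) _).trans h2)
        · have h2 : f s' + g s' ≤ l := hl ⟨s', hs', rfl⟩
          exact le_sub_iff_add_le.2 ((add_le_add_right (hg h) _).trans h2)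
      have h2 : Lf ≤ l - g s := hLf.2 h1
      exact le_sub_comm.1 h2
    have h3 : Lg ≤ l - Lf := hLg.2 (by rintro _ ⟨s, hs, rfl⟩; exact key s hs)
    exact le_sub_iff_add_le'.1 h3

lemma isGLB_sum_mono {κ : Type*} (K : Finset κ) (f : κ → ℝ → M) (L : κ → M) {S : Set ℝ}
    (hS : S.Nonempty) (hmono : ∀ k ∈ K, Monotone (f k))
    (hL : ∀ k ∈ K, IsGLB ((f k) '' S) (L k)) :
    IsGLB ((fun s => ∑ k ∈ K, f k s) '' S) (∑ k ∈ K, L k) := by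
  classical
  induction K using Finset.cons_induction with
  | empty =>
    simp only [Finset.sum_empty]
    have : (fun (_ : ℝ) => (0:M)) '' S = {0} := Set.Nonempty.image_const hS 0
    rw [this]; exact isGLB_singleton
  | cons k K hk ih =>
    have h1 : (fun s => ∑ j ∈ Finset.cons k K hk, f j s)
        = fun s => f k s + ∑ j ∈ K, f j s := by
      funext s; exact Finset.sum_cons hk
    rw [Finset.sum_cons, h1]
    exact isGLB_add_mono (hmono k (Finset.mem_cons_self k K))
      (fun a b hab => Finset.sum_le_sum fun j hj => hmono j (Finset.mem_cons_of_mem hj) hab)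
      (hL k (Finset.mem_cons_self k K))
      (ih (fun j hj => hmono j (Finset.mem_cons_of_mem hj))
          (fun j hj => hL j (Finset.mem_cons_of_mem hj)))

lemma isLUB_sum_mono {κ : Type*} (K : Finset κ) (f : κ → ℝ → M) (L : κ → M) {S : Set ℝ}
    (hS : S.Nonempty) (hmono : ∀ k ∈ K, Monotone (f k))
    (hL : ∀ k ∈ K, IsLUB ((f k) '' S) (L k)) :
    IsLUB ((fun s => ∑ k ∈ K, f k s) '' S) (∑ k ∈ K, L k) := by
  classical
  induction K using Finset.cons_induction with
  | empty =>
    simp only [Finset.sum_empty]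
    have : (fun (_ : ℝ) => (0:M)) '' S = {0} := Set.Nonempty.image_const hS 0
    rw [this]; exact isLUB_singleton
  | cons k K hk ih =>
    have h1 : (fun s => ∑ j ∈ Finset.cons k K hk, f j s)
        = fun s => f k s + ∑ j ∈ K, f j s := by
      funext s; exact Finset.sum_cons hk
    rw [Finset.sum_cons, h1]
    exact isLUB_add_mono (hmono k (Finset.mem_cons_self k K))
      (fun a b hab => Finset.sum_le_sum fun j hj => hmono j (Finset.mem_cons_of_mem hj) hab)
      (hL k (Finset.mem_cons_self k K))
      (ih (fun j hj => hmono j (Finset.mem_cons_of_mem hj))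
          (fun j hj => hL j (Finset.mem_cons_of_mem hj)))

lemma neg_one_pow_smul_le {x : M} (k : ℕ) (hx : 0 ≤ x) : ((-1:ℤ)^k) • x ≤ x := by
  rcases Nat.even_or_odd k with h | h
  · rw [h.neg_one_pow, one_smul]
  · rw [h.neg_one_pow, neg_one_zsmul]
    exact (neg_nonpos.2 hx).trans hx

end OrderLemmas

section Base
variable {G : Type*} [AddCommGroup G] [PartialOrder G] [CovariantClass G G (· + ·) (· ≤ ·)]
variable {ι : Type*} [Fintype ι] [DecidableEq ι]

omit [AddCommGroup G] [CovariantClass G G (· + ·) (· ≤ ·)] [Fintype ι] [DecidableEq ι] in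
lemma mono_of_leftCont {F : (ι → ℝ) → ℤ ×ₗ G}
    (h : ∀ t, IsLUB (F '' {s | ∀ i, s i < t i}) (F t)) : Monotone F := by
  intro a b hab
  refine (h a).2 ?_
  rintro _ ⟨x, hx, rfl⟩
  exact (h b).1 ⟨x, fun i => lt_of_lt_of_le (hx i) (hab i), rfl⟩

lemma lemA {F : (ι → ℝ) → ℤ ×ₗ G}
    (hpos : ∀ t, 0 ≤ F t)
    (hvol : ∀ a b : ι → ℝ, (∀ i, a i ≤ b i) → 0 ≤ volSum F a b)
    (hmono : Monotone F)
    (hzero : ∀ (i : ι) (t : ι → ℝ), IsGLB (Set.range fun r => F (Function.update t i r)) 0)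
    (J : Finset ι) (a b : ι → ℝ) (hab : ∀ i ∈ J, a i ≤ b i) :
    0 ≤ ∑ S ∈ J.powerset, (-1:ℤ)^(J.card - S.card) • F (fun i => if i ∈ S then b i else a i) := by
  classical
  set D := ∑ S ∈ J.powerset, (-1:ℤ)^(J.card - S.card) • F (fun i => if i ∈ S then b i else a i) with hD
  -- the endpoint functions depending on r
  set ar : ℝ → ι → ℝ := fun r i => if i ∈ J then a i else min r (a i) with har
  set br : ι → ℝ := fun i => if i ∈ J then b i else a i with hbr
  have hle : ∀ r, ∀ i, ar r i ≤ br i := by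
    intro r i
    by_cases h : i ∈ J <;> simp [ar, br, h, hab i, min_le_right]
  -- the corner function
  set arg : Finset ι → ℝ → ι → ℝ := fun S r i => if i ∈ S then br i else ar r i with harg
  have hsplit : ∀ r, volSum F (ar r) br =
      (∑ S ∈ Finset.univ.filter (fun S : Finset ι => Jᶜ ⊆ S),
        (-1:ℤ)^(Fintype.card ι - S.card) • F (arg S r)) +
      (∑ S ∈ Finset.univ.filter (fun S : Finset ι => ¬ Jᶜ ⊆ S),
        (-1:ℤ)^(Fintype.card ι - S.card) • F (arg S r)) := by
    intro r
    rw [volSum]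
    exact (Finset.sum_filter_add_sum_filter_not _ _ _).symm
  -- the first block equals D
  have hfirst : ∀ r, (∑ S ∈ Finset.univ.filter (fun S : Finset ι => Jᶜ ⊆ S),
      (-1:ℤ)^(Fintype.card ι - S.card) • F (arg S r)) = D := by
    intro r
    rw [hD]
    refine Finset.sum_nbij' (fun S => S ∩ J) (fun T => T ∪ Jᶜ) ?_ ?_ ?_ ?_ ?_
    · intro S hS
      exact Finset.mem_powerset.2 (Finset.inter_subset_right)
    · intro T hT
      simp only [Finset.mem_filter, Finset.mem_univ, true_and]
      exact Finset.subset_union_right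
    · intro S hS
      simp only [Finset.mem_filter, Finset.mem_univ, true_and] at hS
      ext i
      simp only [Finset.mem_union, Finset.mem_inter, Finset.mem_compl]
      by_cases hiJ : i ∈ J
      · simp [hiJ]
      · simp [hiJ]; exact hS (Finset.mem_compl.2 hiJ)
    · intro T hT
      have hT' := Finset.mem_powerset.1 hT
      ext i
      simp only [Finset.mem_inter, Finset.mem_union, Finset.mem_compl]
      constructor
      · rintro ⟨h1 | h1, h2⟩
        · exact h1
        · exact absurd h2 h1
      · intro h
        exact ⟨Or.inl h, hT' h⟩
    · intro S hS
      simp only [Finset.mem_filter, Finset.mem_univ, true_and] at hS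
      have h1 : S = (S ∩ J) ∪ Jᶜ := by
        ext i
        simp only [Finset.mem_union, Finset.mem_inter, Finset.mem_compl]
        by_cases hiJ : i ∈ J
        · simp [hiJ]
        · simp [hiJ]; exact hS (Finset.mem_compl.2 hiJ)
      have h2 : Disjoint (S ∩ J) Jᶜ := by
        refine Finset.disjoint_left.2 ?_
        intro i hi hic
        exact (Finset.mem_compl.1 hic) (Finset.mem_inter.1 hi).2
      have h1card : S.card = (S ∩ J).card + Jᶜ.card := by
        conv_lhs => rw [h1]
        exact Finset.card_union_of_disjoint h2
      have hcard2 : Fintype.card ι - S.card = J.card - (S ∩ J).card := by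
        rw [Finset.card_compl] at h1card
        have h3 : (S ∩ J).card ≤ J.card := Finset.card_le_card Finset.inter_subset_right
        have h4 : J.card ≤ Fintype.card ι := Finset.card_le_univ J
        omega
      have hargeq : arg S r = fun i => if i ∈ S ∩ J then b i else a i := by
        funext i
        by_cases hiS : i ∈ S <;> by_cases hiJ : i ∈ J
        · simp [arg, br, hiS, hiJ]
        · simp [arg, br, hiS, hiJ]
        · simp [arg, ar, hiS, hiJ]
        · have hic : i ∈ Jᶜ := Finset.mem_compl.2 hiJ
          exact absurd (hS hic) hiS
      simp only [hcard2, hargeq]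
  -- bound the remainder blocks from below by -D
  set K := Finset.univ.filter (fun S : Finset ι => ¬ Jᶜ ⊆ S) with hK
  have hB : ∀ r, -D ≤ ∑ S ∈ K, F (arg S r) := by
    intro r
    have h0 := hvol (ar r) br (hle r)
    rw [hsplit r, hfirst r] at h0
    have h1 : -D ≤ ∑ S ∈ K, (-1:ℤ)^(Fintype.card ι - S.card) • F (arg S r) := by
      have h2 := add_le_add_left h0 (-D)
      simpa using h2
    exact h1.trans (Finset.sum_le_sum fun S _ => neg_one_pow_smul_le _ (hpos _))
  -- the remainder sum has infimum 0
  have hglb : IsGLB ((fun r => ∑ S ∈ K, F (arg S r)) '' Set.univ) (∑ _S ∈ K, (0 : ℤ ×ₗ G)) := by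
    refine isGLB_sum_mono K (fun S r => F (arg S r)) (fun _ => 0) Set.univ_nonempty ?_ ?_
    · intro S _ r r' hrr'
      apply hmono
      intro i
      by_cases hiS : i ∈ S
      · simp [arg, hiS]
      · simp only [arg, hiS, if_false]
        by_cases hiJ : i ∈ J
        · simp [ar, hiJ]
        · simp only [ar, hiJ, if_false]
          exact min_le_min hrr' le_rfl
    · intro S hS
      rw [hK, Finset.mem_filter] at hS
      obtain ⟨i₀, hi₀c, hi₀S⟩ := Finset.not_subset.1 hS.2
      have hi₀J : i₀ ∉ J := Finset.mem_compl.1 hi₀c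
      set w : ι → ℝ := fun i => max (a i) (b i) with hw
      have hup : ∀ r, F (arg S r) ≤ F (Function.update w i₀ (min r (a i₀))) := by
        intro r
        apply hmono
        intro i
        by_cases hii : i = i₀
        · subst hii
          simp [arg, hi₀S, ar, hi₀J, Function.update_self]
        · rw [Function.update_of_ne hii]
          by_cases hiS : i ∈ S
          · simp only [arg, hiS, if_true, br, w]
            by_cases hiJ : i ∈ J <;> simp [hiJ, le_max_left, le_max_right]
          · simp only [arg, hiS, if_false, ar, w]
            by_cases hiJ : i ∈ J
            · simp [hiJ, le_max_left]
            · simp only [hiJ, if_false]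
              exact (min_le_right _ _).trans (le_max_left _ _)
      constructor
      · rintro _ ⟨r, -, rfl⟩
        exact hpos _
      · intro l hl
        refine (hzero i₀ w).2 ?_
        rintro _ ⟨ρ, rfl⟩
        have h5 : l ≤ F (arg S (min ρ (a i₀))) := hl ⟨min ρ (a i₀), trivial, rfl⟩
        refine h5.trans ((hup _).trans (hmono ?_))
        intro i
        by_cases hii : i = i₀
        · subst hii
          rw [Function.update_self, Function.update_self]
          exact (min_le_left _ _).trans (min_le_left _ _)
        · rw [Function.update_of_ne hii, Function.update_of_ne hii]
  have hfin : -D ≤ ∑ _S ∈ K, (0 : ℤ ×ₗ G) := by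
    refine hglb.2 ?_
    rintro _ ⟨r, -, rfl⟩
    exact hB r
  rw [Finset.sum_const_zero] at hfin
  exact neg_nonpos.1 hfin

end Base
end SRAux

namespace SRAux
open Paper

section Main
variable {G : Type*} [AddCommGroup G] [PartialOrder G] [CovariantClass G G (· + ·) (· ≤ ·)]
variable {ι : Type*} [Fintype ι] [DecidableEq ι]

/-- complexity of an extended symbol -/
def cplx : RHat → ℕ
  | .real _ => 0
  | _ => 1

@[simp] lemma cplx_real (r : ℝ) : cplx (.real r) = 0 := rfl
@[simp] lemma cplx_realPlus (r : ℝ) : cplx (.realPlus r) = 1 := rfl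
@[simp] lemma cplx_bot : cplx .bot = 1 := rfl
@[simp] lemma cplx_top : cplx .top = 1 := rfl

def toR : RHat → ℝ
  | .real r => r
  | _ => 0

lemma cplx_eq_zero {x : RHat} (h : cplx x = 0) : x = .real (toR x) := by
  cases x <;> simp [cplx, toR] at h ⊢

@[simp] lemma le_real_real {a b : ℝ} : RHat.le (.real a) (.real b) ↔ a ≤ b := Iff.rfl
@[simp] lemma le_real_realPlus {a b : ℝ} : RHat.le (.real a) (.realPlus b) ↔ a ≤ b := Iff.rfl
@[simp] lemma le_realPlus_real {a b : ℝ} : RHat.le (.realPlus a) (.real b) ↔ a < b := Iff.rfl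
@[simp] lemma le_realPlus_realPlus {a b : ℝ} : RHat.le (.realPlus a) (.realPlus b) ↔ a ≤ b := Iff.rfl
@[simp] lemma le_real_bot {a : ℝ} : ¬ RHat.le (.real a) .bot := fun h => h
@[simp] lemma le_realPlus_bot {a : ℝ} : ¬ RHat.le (.realPlus a) .bot := fun h => h
@[simp] lemma le_top_bot : ¬ RHat.le .top .bot := fun h => h
@[simp] lemma le_top_real {a : ℝ} : ¬ RHat.le .top (.real a) := fun h => h
@[simp] lemma le_top_realPlus {a : ℝ} : ¬ RHat.le .top (.realPlus a) := fun h => h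

/-- corner with the `i`-th coordinate overridden by `y` -/
def cornerU (α β : ι → RHat) (S : Finset ι) (i : ι) (y : RHat) : ι → RHat :=
  fun j => if j = i then y else if j ∈ S then β j else α j

lemma cornerU_update {α β : ι → RHat} {S : Finset ι} {i : ι} (y y' : RHat) :
    Function.update (cornerU α β S i y) i y' = cornerU α β S i y' := by
  funext j
  rcases eq_or_ne j i with rfl | hji
  · simp [cornerU]
  · simp [Function.update_of_ne hji, cornerU, hji]

lemma corner_eq_cornerU {α β : ι → RHat} {S : Finset ι} {i : ι} (hiS : i ∉ S) (y : RHat) :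
    (fun j => if j ∈ S then Function.update β i y j else Function.update α i y j)
      = cornerU α β S i y := by
  funext j
  rcases eq_or_ne j i with rfl | hji
  · simp [cornerU, hiS]
  · simp [Function.update_of_ne hji, cornerU, hji]

/-- weighted complexity of a configuration -/
def pairC (J : Finset ι) (α β : ι → RHat) : ℕ :=
  ∑ j : ι, (if j ∈ J then cplx (α j) + cplx (β j) else cplx (α j))

lemma pairC_lt_of {J J₂ : Finset ι} {α β α₂ β₂ : ι → RHat} (i : ι)
    (h_at : (if i ∈ J₂ then cplx (α₂ i) + cplx (β₂ i) else cplx (α₂ i)) <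
      (if i ∈ J then cplx (α i) + cplx (β i) else cplx (α i)))
    (h_off : ∀ j, j ≠ i → (if j ∈ J₂ then cplx (α₂ j) + cplx (β₂ j) else cplx (α₂ j)) ≤
      (if j ∈ J then cplx (α j) + cplx (β j) else cplx (α j))) :
    pairC J₂ α₂ β₂ < pairC J α β := by
  have key : ∀ (Jx : Finset ι) (αx βx : ι → RHat),
      pairC Jx αx βx = (∑ j ∈ Finset.univ.erase i,
        if j ∈ Jx then cplx (αx j) + cplx (βx j) else cplx (αx j)) +
        (if i ∈ Jx then cplx (αx i) + cplx (βx i) else cplx (αx i)) := by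
    intro Jx αx βx
    rw [pairC, ← Finset.sum_erase_add _ _ (Finset.mem_univ i)]
  rw [key J α β, key J₂ α₂ β₂]
  have h1 := Finset.sum_le_sum (f := fun j => if j ∈ J₂ then cplx (α₂ j) + cplx (β₂ j) else cplx (α₂ j))
    (g := fun j => if j ∈ J then cplx (α j) + cplx (β j) else cplx (α j))
    (s := Finset.univ.erase i) (fun j hj => h_off j (Finset.ne_of_mem_erase hj))
  beta_reduce at h1
  omega

/-- the iterated difference as a signed sum -/
def TT (Fh : (ι → RHat) → ℤ ×ₗ G) (J : Finset ι) (α β : ι → RHat) : ℤ ×ₗ G :=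
  ∑ S ∈ J.powerset, (-1:ℤ)^(J.card - S.card) • Fh (fun j => if j ∈ S then β j else α j)

lemma TT_empty (Fh : (ι → RHat) → ℤ ×ₗ G) (α β : ι → RHat) : TT Fh ∅ α β = Fh α := by
  rw [TT, Finset.powerset_empty, Finset.sum_singleton]
  simp

lemma TT_split (Fh : (ι → RHat) → ℤ ×ₗ G) {J : Finset ι} {i : ι} (hi : i ∈ J) (α β : ι → RHat) :
    TT Fh J α β =
      TT Fh (J.erase i) (Function.update α i (β i)) (Function.update β i (β i)) -
      TT Fh (J.erase i) (Function.update α i (α i)) (Function.update β i (α i)) := by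
  classical
  have hni : i ∉ J.erase i := Finset.notMem_erase i J
  have hins : J = insert i (J.erase i) := (Finset.insert_erase hi).symm
  have hcard : J.card = (J.erase i).card + 1 := (Finset.card_erase_add_one hi).symm
  rw [TT]
  conv_lhs => rw [hins]
  rw [Finset.sum_powerset_insert hni]
  have hS1 : ∑ t ∈ (J.erase i).powerset,
      (-1:ℤ)^((insert i (J.erase i)).card - t.card) • Fh (fun j => if j ∈ t then β j else α j)
      = - TT Fh (J.erase i) (Function.update α i (α i)) (Function.update β i (α i)) := by
    rw [eq_neg_iff_add_eq_zero, TT, ← Finset.sum_add_distrib]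
    apply Finset.sum_eq_zero
    intro t ht
    have htc : t.card ≤ (J.erase i).card := Finset.card_le_card (Finset.mem_powerset.1 ht)
    have hexp : (insert i (J.erase i)).card - t.card = ((J.erase i).card - t.card) + 1 := by
      rw [← hins, hcard]; omega
    have harg : (fun j => if j ∈ t then Function.update β i (α i) j else Function.update α i (α i) j)
        = (fun j => if j ∈ t then β j else α j) := by
      funext j
      rcases eq_or_ne j i with rfl | hji
      · have : j ∉ t := fun hjt => hni (Finset.mem_powerset.1 ht hjt)
        simp [this]
      · simp [Function.update_of_ne hji]
    rw [harg, hexp, pow_succ, mul_smul, neg_one_zsmul]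
    exact (congrArg (· + _) (smul_neg _ _)).trans (neg_add_cancel _)
  have hS2 : ∑ t ∈ (J.erase i).powerset,
      (-1:ℤ)^((insert i (J.erase i)).card - (insert i t).card) •
        Fh (fun j => if j ∈ insert i t then β j else α j)
      = TT Fh (J.erase i) (Function.update α i (β i)) (Function.update β i (β i)) := by
    rw [TT]
    apply Finset.sum_congr rfl
    intro t ht
    have hit : i ∉ t := fun hit => hni (Finset.mem_powerset.1 ht hit)
    have htc : t.card ≤ (J.erase i).card := Finset.card_le_card (Finset.mem_powerset.1 ht)
    have hexp : (insert i (J.erase i)).card - (insert i t).card = (J.erase i).card - t.card := by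
      rw [← hins, hcard, Finset.card_insert_of_notMem hit]
      omega
    have harg : (fun j => if j ∈ insert i t then β j else α j)
        = (fun j => if j ∈ t then Function.update β i (β i) j else Function.update α i (β i) j) := by
      funext j
      rcases eq_or_ne j i with rfl | hji
      · simp [hit]
      · simp [Finset.mem_insert, hji, Function.update_of_ne hji]
    rw [hexp, harg]
  rw [hS1, hS2, neg_add_eq_sub]

end Main
end SRAux

namespace SRAux
open Paper

section Main2
variable {G : Type*} [AddCommGroup G] [PartialOrder G] [CovariantClass G G (· + ·) (· ≤ ·)]
variable {ι : Type*} [Fintype ι] [DecidableEq ι]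

lemma TT_singleton (Fh : (ι → RHat) → ℤ ×ₗ G) (i : ι) (α β : ι → RHat) :
    TT Fh {i} α β = Fh (Function.update α i (β i)) - Fh α := by
  have h := TT_split Fh (Finset.mem_singleton_self i) α β
  rwa [Finset.erase_singleton, TT_empty, TT_empty, Function.update_eq_self] at h

lemma TT_posneg (Fh : (ι → RHat) → ℤ ×ₗ G) (J : Finset ι) (α β : ι → RHat) :
    TT Fh J α β =
      (∑ S ∈ J.powerset.filter (fun S => Even (J.card - S.card)),
        Fh (fun j => if j ∈ S then β j else α j)) -
      (∑ S ∈ J.powerset.filter (fun S => ¬ Even (J.card - S.card)),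
        Fh (fun j => if j ∈ S then β j else α j)) := by
  rw [TT, ← Finset.sum_filter_add_sum_filter_not J.powerset (fun S => Even (J.card - S.card)),
    sub_eq_add_neg]
  congr 1
  · apply Finset.sum_congr rfl
    intro S hS
    rw [Finset.mem_filter] at hS
    rw [hS.2.neg_one_pow, one_smul]
  · rw [← Finset.sum_neg_distrib]
    apply Finset.sum_congr rfl
    intro S hS
    rw [Finset.mem_filter] at hS
    rw [(Nat.not_even_iff_odd.1 hS.2).neg_one_pow, neg_one_zsmul]

end Main2
end SRAux

namespace SRAux
open Paper

section Main3
variable {G : Type*} [AddCommGroup G] [PartialOrder G] [CovariantClass G G (· + ·) (· ≤ ·)]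
variable {ι : Type*} [Fintype ι] [DecidableEq ι]

lemma allReal {F : (ι → ℝ) → ℤ ×ₗ G} {Fh : (ι → RHat) → ℤ ×ₗ G}
    (hpos : ∀ t, 0 ≤ F t)
    (hvol : ∀ a b : ι → ℝ, (∀ i, a i ≤ b i) → 0 ≤ volSum F a b)
    (hmono : Monotone F)
    (hzero : ∀ (i : ι) (t : ι → ℝ), IsGLB (Set.range fun r => F (Function.update t i r)) 0)
    (hext : IsExtension F Fh)
    (J : Finset ι) (α β : ι → RHat) (h0 : pairC J α β = 0)
    (hle : ∀ i ∈ J, (α i).le (β i)) (hfix : ∀ i ∉ J, α i = β i) :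
    0 ≤ TT Fh J α β := by
  have hterm : ∀ j : ι, (if j ∈ J then cplx (α j) + cplx (β j) else cplx (α j)) = 0 := by
    intro j
    exact (Finset.sum_eq_zero_iff.1 h0) j (Finset.mem_univ j)
  have hα : ∀ j, α j = .real (toR (α j)) := by
    intro j
    have hj := hterm j
    by_cases hjJ : j ∈ J
    · rw [if_pos hjJ] at hj; exact cplx_eq_zero (by omega)
    · rw [if_neg hjJ] at hj; exact cplx_eq_zero hj
  have hβ : ∀ j, β j = .real (toR (β j)) := by
    intro j
    by_cases hjJ : j ∈ J
    · have hj := hterm j; rw [if_pos hjJ] at hj; exact cplx_eq_zero (by omega)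
    · rw [← hfix j hjJ]; exact hα j
  have hab : ∀ j ∈ J, toR (α j) ≤ toR (β j) := by
    intro j hj
    have h := hle j hj
    rw [hα j, hβ j] at h
    exact h
  have hTT : TT Fh J α β = ∑ S ∈ J.powerset, (-1:ℤ)^(J.card - S.card) •
      F (fun j => if j ∈ S then toR (β j) else toR (α j)) := by
    rw [TT]
    apply Finset.sum_congr rfl
    intro S _
    have harg : (fun j => if j ∈ S then β j else α j)
        = (fun j => RHat.real (if j ∈ S then toR (β j) else toR (α j))) := by
      funext j
      by_cases hjS : j ∈ S
      · rw [if_pos hjS, if_pos hjS, ← hβ j]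
      · rw [if_neg hjS, if_neg hjS, ← hα j]
    rw [harg, hext.1]
  rw [hTT]
  exact lemA hpos hvol hmono hzero J _ _ hab

lemma main {F : (ι → ℝ) → ℤ ×ₗ G} {Fh : (ι → RHat) → ℤ ×ₗ G}
    (hpos : ∀ t, 0 ≤ F t)
    (hvol : ∀ a b : ι → ℝ, (∀ i, a i ≤ b i) → 0 ≤ volSum F a b)
    (hmono : Monotone F)
    (hzero : ∀ (i : ι) (t : ι → ℝ), IsGLB (Set.range fun r => F (Function.update t i r)) 0)
    (hext : IsExtension F Fh) :
    ∀ (N : ℕ) (J : Finset ι) (α β : ι → RHat), pairC J α β ≤ N →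
      (∀ i ∈ J, (α i).le (β i)) → (∀ i ∉ J, α i = β i) → 0 ≤ TT Fh J α β := by
  intro N
  induction N with
  | zero =>
    intro J α β hC hle hfix
    exact allReal hpos hvol hmono hzero hext J α β (Nat.le_zero.1 hC) hle hfix
  | succ N ih =>
    intro J α β hC hle hfix
    by_cases h00 : pairC J α β = 0
    · exact allReal hpos hvol hmono hzero hext J α β h00 hle hfix
    rw [pairC] at h00
    obtain ⟨i, -, hi0⟩ := Finset.exists_ne_zero_of_sum_ne_zero h00
    have hi : 1 ≤ (if i ∈ J then cplx (α i) + cplx (β i) else cplx (α i)) :=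
      Nat.one_le_iff_ne_zero.2 hi0
    -- monotonicity of single corner terms in a real i-th coordinate
    have hmonoT : ∀ S : Finset ι, S ⊆ J → Monotone (fun s : ℝ => Fh (cornerU α β S i (.real s))) := by
      intro S hSJ s s' hss'
      have hpc : pairC {i} (cornerU α β S i (.real s))
          (Function.update (cornerU α β S i (.real s)) i (.real s')) < pairC J α β := by
        apply pairC_lt_of i
        · rw [if_pos (Finset.mem_singleton_self i), Function.update_self]
          have h1 : cornerU α β S i (.real s) i = .real s := by simp [cornerU]
          rw [h1]
          simp only [cplx_real, cplx_realPlus, cplx_bot, cplx_top]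
          omega
        · intro j hj
          rw [if_neg (fun h => hj (Finset.mem_singleton.1 h))]
          have h1 : cornerU α β S i (.real s) j = if j ∈ S then β j else α j := by
            simp [cornerU, hj]
          rw [h1]
          by_cases hjJ : j ∈ J
          · rw [if_pos hjJ]
            by_cases hjS : j ∈ S
            · rw [if_pos hjS]; omega
            · rw [if_neg hjS]; omega
          · rw [if_neg hjJ, if_neg (fun hjS => hjJ (hSJ hjS))]
      have h1 := ih {i} (cornerU α β S i (.real s))
          (Function.update (cornerU α β S i (.real s)) i (.real s'))
          (Nat.lt_succ_iff.mp (lt_of_lt_of_le hpc hC)) ?_ ?_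
      · rw [TT_singleton, Function.update_self, cornerU_update] at h1
        exact sub_nonneg.1 h1
      · intro j hj
        rw [Finset.mem_singleton] at hj
        subst hj
        rw [Function.update_self]
        have h1 : cornerU α β S j (.real s) j = .real s := by simp [cornerU]
        rw [h1]
        exact hss'
      · intro j hj
        rw [Finset.mem_singleton] at hj
        rw [Function.update_of_ne hj]
    -- glb/lub facts for single corner terms
    have hglbT : ∀ (r : ℝ) (S : Finset ι),
        IsGLB ((fun s : ℝ => Fh (cornerU α β S i (.real s))) '' Set.Ioi r)
          (Fh (cornerU α β S i (.realPlus r))) := by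
      intro r S
      have h0' := hext.2.1 (cornerU α β S i (.realPlus r)) i r (by simp [cornerU])
      have hset : {y | ∃ s : ℝ, r < s ∧
            y = Fh (Function.update (cornerU α β S i (.realPlus r)) i (.real s))}
          = (fun s : ℝ => Fh (cornerU α β S i (.real s))) '' Set.Ioi r := by
        ext y
        constructor
        · rintro ⟨s, hs, rfl⟩; exact ⟨s, hs, by rw [cornerU_update]⟩
        · rintro ⟨s, hs, rfl⟩; exact ⟨s, hs, by rw [cornerU_update]⟩
      rwa [hset] at h0'
    have hlubT : ∀ (S : Finset ι),
        IsLUB ((fun s : ℝ => Fh (cornerU α β S i (.real s))) '' Set.univ)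
          (Fh (cornerU α β S i .top)) := by
      intro S
      have h0' := hext.2.2.1 (cornerU α β S i .top) i (by simp [cornerU])
      have hset : {y | ∃ s : ℝ, y = Fh (Function.update (cornerU α β S i .top) i (.real s))}
          = (fun s : ℝ => Fh (cornerU α β S i (.real s))) '' Set.univ := by
        ext y
        constructor
        · rintro ⟨s, rfl⟩; exact ⟨s, trivial, by rw [cornerU_update]⟩
        · rintro ⟨s, -, rfl⟩; exact ⟨s, by rw [cornerU_update]⟩
      rwa [hset] at h0'
    have hbotT : ∀ S : Finset ι, Fh (cornerU α β S i .bot) = 0 :=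
      fun S => hext.2.2.2 _ i (by simp [cornerU])
    by_cases hiJ : i ∈ J
    · -- difference coordinate
      rw [if_pos hiJ] at hi
      set Ke := (J.erase i).powerset.filter (fun S => Even ((J.erase i).card - S.card)) with hKe
      set Ko := (J.erase i).powerset.filter (fun S => ¬ Even ((J.erase i).card - S.card)) with hKo
      set Pf : RHat → ℤ ×ₗ G := fun y => ∑ S ∈ Ke, Fh (cornerU α β S i y) with hPf
      set Nf : RHat → ℤ ×ₗ G := fun y => ∑ S ∈ Ko, Fh (cornerU α β S i y) with hNf
      have hKeJ : ∀ S ∈ Ke, S ⊆ J := by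
        intro S hS
        exact (Finset.mem_powerset.1 (Finset.mem_filter.1 hS).1).trans (Finset.erase_subset i J)
      have hKoJ : ∀ S ∈ Ko, S ⊆ J := by
        intro S hS
        exact (Finset.mem_powerset.1 (Finset.mem_filter.1 hS).1).trans (Finset.erase_subset i J)
      have hKeNi : ∀ S ∈ Ke, i ∉ S := by
        intro S hS hiS
        exact Finset.notMem_erase i J (Finset.mem_powerset.1 (Finset.mem_filter.1 hS).1 hiS)
      have hKoNi : ∀ S ∈ Ko, i ∉ S := by
        intro S hS hiS
        exact Finset.notMem_erase i J (Finset.mem_powerset.1 (Finset.mem_filter.1 hS).1 hiS)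
      have hone : ∀ z : RHat,
          TT Fh (J.erase i) (Function.update α i z) (Function.update β i z) = Pf z - Nf z := by
        intro z
        rw [TT_posneg, hPf, hNf]
        congr 1
        · apply Finset.sum_congr rfl
          intro S hS
          rw [corner_eq_cornerU (hKeNi S hS) z]
        · apply Finset.sum_congr rfl
          intro S hS
          rw [corner_eq_cornerU (hKoNi S hS) z]
      have hU : ∀ x y : RHat, TT Fh J (Function.update α i x) (Function.update β i y)
          = (Pf y - Nf y) - (Pf x - Nf x) := by
        intro x y
        rw [TT_split Fh hiJ]
        simp only [Function.update_self, Function.update_idem]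
        rw [hone, hone]
      have hTTeq : TT Fh J α β = (Pf (β i) - Nf (β i)) - (Pf (α i) - Nf (α i)) := by
        have h := hU (α i) (β i)
        rwa [Function.update_eq_self, Function.update_eq_self] at h
      have hIH2 : ∀ x y : RHat, RHat.le x y → cplx x + cplx y < cplx (α i) + cplx (β i) →
          Pf x - Nf x ≤ Pf y - Nf y := by
        intro x y hxy hlt
        have hpc : pairC J (Function.update α i x) (Function.update β i y) < pairC J α β := by
          apply pairC_lt_of i
          · rw [if_pos hiJ, if_pos hiJ, Function.update_self, Function.update_self]
            exact hlt
          · intro j hj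
            rw [Function.update_of_ne hj, Function.update_of_ne hj]
        have h1 := ih J (Function.update α i x) (Function.update β i y)
          (Nat.lt_succ_iff.mp (lt_of_lt_of_le hpc hC)) ?_ ?_
        · rw [hU x y] at h1
          exact sub_nonneg.1 h1
        · intro j hj
          rcases eq_or_ne j i with rfl | hji
          · rw [Function.update_self, Function.update_self]; exact hxy
          · rw [Function.update_of_ne hji, Function.update_of_ne hji]; exact hle j hj
        · intro j hj
          have hji : j ≠ i := fun h => hj (h ▸ hiJ)
          rw [Function.update_of_ne hji, Function.update_of_ne hji]
          exact hfix j hj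
      have hPglb : ∀ r : ℝ, IsGLB ((fun s : ℝ => Pf (.real s)) '' Set.Ioi r) (Pf (.realPlus r)) := by
        intro r
        simp only [hPf]
        exact isGLB_sum_mono Ke (fun S s => Fh (cornerU α β S i (.real s)))
          (fun S => Fh (cornerU α β S i (.realPlus r))) ⟨r+1, by simp⟩
          (fun S hS => hmonoT S (hKeJ S hS)) (fun S _ => hglbT r S)
      have hNglb : ∀ r : ℝ, IsGLB ((fun s : ℝ => Nf (.real s)) '' Set.Ioi r) (Nf (.realPlus r)) := by
        intro r
        simp only [hNf]
        exact isGLB_sum_mono Ko (fun S s => Fh (cornerU α β S i (.real s)))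
          (fun S => Fh (cornerU α β S i (.realPlus r))) ⟨r+1, by simp⟩
          (fun S hS => hmonoT S (hKoJ S hS)) (fun S _ => hglbT r S)
      have hPlub : IsLUB ((fun s : ℝ => Pf (.real s)) '' Set.univ) (Pf .top) := by
        simp only [hPf]
        exact isLUB_sum_mono Ke (fun S s => Fh (cornerU α β S i (.real s)))
          (fun S => Fh (cornerU α β S i .top)) ⟨0, trivial⟩
          (fun S hS => hmonoT S (hKeJ S hS)) (fun S _ => hlubT S)
      have hNlub : IsLUB ((fun s : ℝ => Nf (.real s)) '' Set.univ) (Nf .top) := by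
        simp only [hNf]
        exact isLUB_sum_mono Ko (fun S s => Fh (cornerU α β S i (.real s)))
          (fun S => Fh (cornerU α β S i .top)) ⟨0, trivial⟩
          (fun S hS => hmonoT S (hKoJ S hS)) (fun S _ => hlubT S)
      have hNmono : Monotone (fun s : ℝ => Nf (.real s)) := by
        intro s s' hss'
        simp only [hNf]
        exact Finset.sum_le_sum (fun S hS => hmonoT S (hKoJ S hS) hss')
      have step_glb : ∀ (x : RHat) (b : ℝ),
          (∀ s : ℝ, b < s → Pf x - Nf x ≤ Pf (.real s) - Nf (.real s)) →
          Pf x - Nf x ≤ Pf (.realPlus b) - Nf (.realPlus b) := by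
        intro x b hx
        rw [le_sub_iff_add_le]
        refine (hPglb b).2 ?_
        rintro _ ⟨s, hs, rfl⟩
        have h2 : Nf (.realPlus b) ≤ Nf (.real s) := (hNglb b).1 ⟨s, hs, rfl⟩
        calc Pf x - Nf x + Nf (.realPlus b)
            ≤ (Pf (.real s) - Nf (.real s)) + Nf (.real s) := add_le_add (hx s hs) h2
          _ = Pf (.real s) := sub_add_cancel _ _
      have step_lub : ∀ (x : RHat) (c : ℝ),
          (∀ s : ℝ, c < s → Pf x - Nf x ≤ Pf (.real s) - Nf (.real s)) →
          Pf x - Nf x ≤ Pf .top - Nf .top := by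
        intro x c hx
        rw [le_sub_iff_add_le]
        have key : ∀ s : ℝ, Nf (.real s) ≤ Pf .top - (Pf x - Nf x) := by
          intro s
          have hs' : c < max s (c+1) := lt_of_lt_of_le (lt_add_one c) (le_max_right _ _)
          have h1 := hx _ hs'
          have h2 : Pf (.real (max s (c+1))) ≤ Pf .top := hPlub.1 ⟨_, trivial, rfl⟩
          have h3 : Nf (.real s) ≤ Nf (.real (max s (c+1))) := hNmono (le_max_left _ _)
          have h4 : Nf (.real (max s (c+1))) ≤ Pf (.real (max s (c+1))) - (Pf x - Nf x) := by
            rw [le_sub_iff_add_le, add_comm]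
            exact le_sub_iff_add_le.1 h1
          exact h3.trans (h4.trans (sub_le_sub_right h2 _))
        have h5 : Nf .top ≤ Pf .top - (Pf x - Nf x) :=
          hNlub.2 (by rintro _ ⟨s, -, rfl⟩; exact key s)
        rw [add_comm]
        exact le_sub_iff_add_le.1 h5
      by_cases heq : α i = β i
      · rw [hTTeq, heq]
        exact le_of_eq (sub_self _).symm
      rw [hTTeq, sub_nonneg]
      have hlei := hle i hiJ
      rcases hA : α i with _ | a | a | _
      · -- α i = bot
        have hPb : Pf .bot = 0 := by
          rw [hPf]; exact Finset.sum_eq_zero fun S _ => hbotT S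
        have hNb : Nf .bot = 0 := by
          rw [hNf]; exact Finset.sum_eq_zero fun S _ => hbotT S
        rw [hPb, hNb, sub_zero]
        have h1 := ih (J.erase i) (Function.update α i (β i)) (Function.update β i (β i)) ?_ ?_ ?_
        · rw [hone (β i)] at h1
          exact h1
        · have hpc : pairC (J.erase i) (Function.update α i (β i)) (Function.update β i (β i))
              < pairC J α β := by
            apply pairC_lt_of i
            · rw [if_neg (Finset.notMem_erase i J), if_pos hiJ, Function.update_self, hA]
              simp only [cplx_real, cplx_realPlus, cplx_bot, cplx_top]
              omega
            · intro j hj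
              rw [Function.update_of_ne hj, Function.update_of_ne hj]
              by_cases hjJ : j ∈ J
              · rw [if_pos (Finset.mem_erase.2 ⟨hj, hjJ⟩), if_pos hjJ]
              · rw [if_neg (fun h => hjJ (Finset.mem_of_mem_erase h)), if_neg hjJ]
          omega
        · intro j hj
          have hji : j ≠ i := Finset.ne_of_mem_erase hj
          rw [Function.update_of_ne hji, Function.update_of_ne hji]
          exact hle j (Finset.mem_of_mem_erase hj)
        · intro j hj
          rcases eq_or_ne j i with rfl | hji
          · rw [Function.update_self, Function.update_self]
          · rw [Function.update_of_ne hji, Function.update_of_ne hji]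
            exact hfix j (fun hjJ => hj (Finset.mem_erase.2 ⟨hji, hjJ⟩))
      · -- α i = real a
        rcases hB : β i with _ | b | b | _
        · rw [hA, hB] at hlei; exact absurd hlei le_real_bot
        · rw [hA, hB] at hi; simp [cplx_real] at hi
        · rw [hA, hB] at hlei
          exact step_glb (.real a) b (fun s hs => hIH2 _ _
            (le_real_real.2 (hlei.trans hs.le)) (by rw [hA, hB]; simp [cplx_real, cplx_realPlus, cplx_bot, cplx_top]))
        · exact step_lub (.real a) a (fun s hs => hIH2 _ _
            (le_real_real.2 hs.le) (by rw [hA, hB]; simp [cplx_real, cplx_realPlus, cplx_bot, cplx_top]))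
      · -- α i = realPlus a
        rcases hB : β i with _ | b | b | _
        · rw [hA, hB] at hlei; exact absurd hlei le_realPlus_bot
        · -- β i = real b, a < b
          rw [hA, hB] at hlei
          rw [sub_le_iff_le_add]
          have key : ∀ s, a < s →
              Pf (.realPlus a) - (Pf (.real b) - Nf (.real b)) ≤ Nf (.real s) := by
            intro s hs
            have h1 : Pf (.realPlus a) ≤ Pf (.real (min s b)) :=
              (hPglb a).1 ⟨min s b, lt_min hs hlei, rfl⟩
            have h2 : Pf (.real (min s b)) - Nf (.real (min s b)) ≤ Pf (.real b) - Nf (.real b) :=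
              hIH2 (.real (min s b)) (.real b) (le_real_real.2 (min_le_right s b))
                (by rw [hA, hB]; simp [cplx_real, cplx_realPlus, cplx_bot, cplx_top])
            have h3 : Nf (.real (min s b)) ≤ Nf (.real s) := hNmono (min_le_left s b)
            exact (sub_le_sub_right h1 _).trans ((sub_le_comm.1 h2).trans h3)
          have h5 : Pf (.realPlus a) - (Pf (.real b) - Nf (.real b)) ≤ Nf (.realPlus a) :=
            (hNglb a).2 (by rintro _ ⟨s, hs, rfl⟩; exact key s hs)
          rw [sub_le_iff_le_add] at h5
          rwa [add_comm]
        · rw [hA, hB] at hlei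
          exact step_glb (.realPlus a) b (fun s hs => hIH2 _ _
            (le_realPlus_real.2 (lt_of_le_of_lt hlei hs)) (by rw [hA, hB]; simp [cplx_real, cplx_realPlus, cplx_bot, cplx_top]))
        · exact step_lub (.realPlus a) a (fun s hs => hIH2 _ _
            (le_realPlus_real.2 hs) (by rw [hA, hB]; simp [cplx_real, cplx_realPlus, cplx_bot, cplx_top]))
      · -- α i = top
        rcases hB : β i with _ | b | b | _
        · rw [hA, hB] at hlei; exact absurd hlei le_top_bot
        · rw [hA, hB] at hlei; exact absurd hlei le_top_real
        · rw [hA, hB] at hlei; exact absurd hlei le_top_realPlus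
        · exact absurd (hA.trans hB.symm) heq
    · -- fixed coordinate
      rw [if_neg hiJ] at hi
      have hfixi : β i = α i := (hfix i hiJ).symm
      set Ke := J.powerset.filter (fun S => Even (J.card - S.card)) with hKe
      set Ko := J.powerset.filter (fun S => ¬ Even (J.card - S.card)) with hKo
      set Pf : RHat → ℤ ×ₗ G := fun y => ∑ S ∈ Ke, Fh (cornerU α β S i y) with hPf
      set Nf : RHat → ℤ ×ₗ G := fun y => ∑ S ∈ Ko, Fh (cornerU α β S i y) with hNf
      have hKeJ : ∀ S ∈ Ke, S ⊆ J := fun S hS => Finset.mem_powerset.1 (Finset.mem_filter.1 hS).1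
      have hKoJ : ∀ S ∈ Ko, S ⊆ J := fun S hS => Finset.mem_powerset.1 (Finset.mem_filter.1 hS).1
      have hKeNi : ∀ S ∈ Ke, i ∉ S := fun S hS hiS => hiJ (hKeJ S hS hiS)
      have hKoNi : ∀ S ∈ Ko, i ∉ S := fun S hS hiS => hiJ (hKoJ S hS hiS)
      have hone : ∀ z : RHat,
          TT Fh J (Function.update α i z) (Function.update β i z) = Pf z - Nf z := by
        intro z
        rw [TT_posneg, hPf, hNf]
        congr 1
        · apply Finset.sum_congr rfl
          intro S hS
          rw [corner_eq_cornerU (hKeNi S hS) z]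
        · apply Finset.sum_congr rfl
          intro S hS
          rw [corner_eq_cornerU (hKoNi S hS) z]
      have hTT2 : TT Fh J α β = Pf (α i) - Nf (α i) := by
        have hupd : Function.update β i (α i) = β := by
          rw [← hfixi]; exact Function.update_eq_self i β
        have h := hone (α i)
        rwa [Function.update_eq_self, hupd] at h
      have hIH3 : ∀ s : ℝ, Nf (.real s) ≤ Pf (.real s) := by
        intro s
        have h1 := ih J (Function.update α i (.real s)) (Function.update β i (.real s)) ?_ ?_ ?_
        · rw [hone] at h1
          exact sub_nonneg.1 h1
        · have hpc : pairC J (Function.update α i (.real s)) (Function.update β i (.real s))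
              < pairC J α β := by
            apply pairC_lt_of i
            · rw [if_neg hiJ, if_neg hiJ, Function.update_self]
              simp only [cplx_real, cplx_realPlus, cplx_bot, cplx_top]
              omega
            · intro j hj
              rw [Function.update_of_ne hj, Function.update_of_ne hj]
          omega
        · intro j hj
          have hji : j ≠ i := fun h => hiJ (h ▸ hj)
          rw [Function.update_of_ne hji, Function.update_of_ne hji]
          exact hle j hj
        · intro j hj
          rcases eq_or_ne j i with rfl | hji
          · rw [Function.update_self, Function.update_self]
          · rw [Function.update_of_ne hji, Function.update_of_ne hji]
            exact hfix j hj
      have hPglb : ∀ r : ℝ, IsGLB ((fun s : ℝ => Pf (.real s)) '' Set.Ioi r) (Pf (.realPlus r)) := by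
        intro r
        simp only [hPf]
        exact isGLB_sum_mono Ke (fun S s => Fh (cornerU α β S i (.real s)))
          (fun S => Fh (cornerU α β S i (.realPlus r))) ⟨r+1, by simp⟩
          (fun S hS => hmonoT S (hKeJ S hS)) (fun S _ => hglbT r S)
      have hNglb : ∀ r : ℝ, IsGLB ((fun s : ℝ => Nf (.real s)) '' Set.Ioi r) (Nf (.realPlus r)) := by
        intro r
        simp only [hNf]
        exact isGLB_sum_mono Ko (fun S s => Fh (cornerU α β S i (.real s)))
          (fun S => Fh (cornerU α β S i (.realPlus r))) ⟨r+1, by simp⟩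
          (fun S hS => hmonoT S (hKoJ S hS)) (fun S _ => hglbT r S)
      have hPlub : IsLUB ((fun s : ℝ => Pf (.real s)) '' Set.univ) (Pf .top) := by
        simp only [hPf]
        exact isLUB_sum_mono Ke (fun S s => Fh (cornerU α β S i (.real s)))
          (fun S => Fh (cornerU α β S i .top)) ⟨0, trivial⟩
          (fun S hS => hmonoT S (hKeJ S hS)) (fun S _ => hlubT S)
      have hNlub : IsLUB ((fun s : ℝ => Nf (.real s)) '' Set.univ) (Nf .top) := by
        simp only [hNf]
        exact isLUB_sum_mono Ko (fun S s => Fh (cornerU α β S i (.real s)))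
          (fun S => Fh (cornerU α β S i .top)) ⟨0, trivial⟩
          (fun S hS => hmonoT S (hKoJ S hS)) (fun S _ => hlubT S)
      rcases hA : α i with _ | a | r | _
      · -- bot
        have hPb : Pf .bot = 0 := by
          rw [hPf]; exact Finset.sum_eq_zero fun S _ => hbotT S
        have hNb : Nf .bot = 0 := by
          rw [hNf]; exact Finset.sum_eq_zero fun S _ => hbotT S
        rw [hTT2, hA, hPb, hNb, sub_zero]
      · rw [hA] at hi; simp [cplx_real] at hi
      · rw [hTT2, hA, sub_nonneg]
        refine (hPglb r).2 ?_
        rintro _ ⟨s, hs, rfl⟩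
        exact ((hNglb r).1 ⟨s, hs, rfl⟩).trans (hIH3 s)
      · rw [hTT2, hA, sub_nonneg]
        refine hNlub.2 ?_
        rintro _ ⟨s, -, rfl⟩
        exact (hIH3 s).trans (hPlub.1 ⟨s, trivial, rfl⟩)

end Main3
end SRAux

open Paper in
/-- Lemma 3.3: for an `n`-dimensional spectral resolution `F` on the
perfect effect algebra `Γ_ea(ℤ ×ₗ G,(1,0))` and its extension `Fh` to the symbols
`-∞, r, r⁺, +∞`, every iterated difference
`Δ_{i₁}(α₁,β₁)⋯Δ_{i_k}(α_k,β_k)F(v̄)` with extended endpoints `α_l ≤ β_l` is `≥ 0`. -/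
theorem statement_7 {G : Type*} [AddCommGroup G] [PartialOrder G]
    [CovariantClass G G (· + ·) (· ≤ ·)]
    (hdir : DirectedPO G) (hip : RieszInterp G) (hsc : MonSigmaComplete G)
    {n : ℕ} (F : (Fin n → ℝ) → ℤ ×ₗ G) (hF : IsSR1 F)
    (Fh : (Fin n → RHat) → ℤ ×ₗ G) (hFh : IsExtension F Fh)
    (J : Finset (Fin n)) (hJ : J.Nonempty) (α β : Fin n → RHat)
    (hαβ : ∀ i ∈ J, (α i).le (β i)) (v : Fin n → ℝ) :
    0 ≤ ∑ S ∈ J.powerset, (-1 : ℤ) ^ (J.card - S.card) •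
      Fh (fun i => if i ∈ S then β i else if i ∈ J then α i else RHat.real (v i)) := by
  classical
  have key := SRAux.main (F := F) (Fh := Fh) (fun t => (hF.mem t).1) hF.vol
    (SRAux.mono_of_leftCont hF.leftCont) hF.coordZero hFh
    (SRAux.pairC J (fun i => if i ∈ J then α i else RHat.real (v i))
      (fun i => if i ∈ J then β i else RHat.real (v i)))
    J (fun i => if i ∈ J then α i else RHat.real (v i))
    (fun i => if i ∈ J then β i else RHat.real (v i)) le_rfl ?_ ?_
  · rw [SRAux.TT] at key
    have heq : ∀ S ∈ J.powerset,
        (fun i => if i ∈ S then (if i ∈ J then β i else RHat.real (v i))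
          else (if i ∈ J then α i else RHat.real (v i)))
        = (fun i => if i ∈ S then β i else if i ∈ J then α i else RHat.real (v i)) := by
      intro S hS
      have hSJ := Finset.mem_powerset.1 hS
      funext i
      by_cases hiS : i ∈ S
      · rw [if_pos hiS, if_pos hiS, if_pos (hSJ hiS)]
      · rw [if_neg hiS, if_neg hiS]
    calc (0 : ℤ ×ₗ G) ≤ _ := key
      _ = _ := Finset.sum_congr rfl (fun S hS => by rw [heq S hS])
  · intro i hi
    simp only [if_pos hi]
    exact hαβ i hi
  · intro i hi
    simp only [if_neg hi]
end
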